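/- arXiv:2410.04216 — 4 statements merged into one kernel-verified Lean document; each statement's English description precedes it below -/
import Mathlib

section
/- For every element a of the prime field F_p (viewed inside F_q), the sum S(a) = Σ_{i=0}^{2ℓ^m−1} χ(a·ξ^i) satisfies S(a) = ζ_p^{ℓ^{m−1}(ℓ−1)a} + ζ_p^{−ℓ^{m−1}(ℓ−1)a} + (ℓ−1)·(ζ_p^{ℓ^{m−1}a} + ζ_p^{−ℓ^{m−1}a}) + 2ℓ^m − 2ℓ, where a in the exponents is lifted to an integer in {0,…,p−1}. -/
open Finset Polynomial

section Helpers

lemma geomIf {F : Type*} [Field F] [DecidableEq F] (y : F) (c : ℕ) (hy : y ^ c = 1) :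
    ∑ k ∈ range c, y ^ k = if y = 1 then (c : F) else 0 := by
  by_cases h : y = 1
  · simp [h]
  · rw [if_neg h, geom_sum_eq h, hy, sub_self, zero_div]

lemma filterImage (d c : ℕ) (hd : 0 < d) :
    (range (d * c)).filter (fun u => d ∣ u) = (range c).image (fun k => d * k) := by
  ext u
  simp only [mem_filter, mem_range, mem_image]
  constructor
  · rintro ⟨hu, k, rfl⟩
    exact ⟨k, by exact lt_of_mul_lt_mul_left hu (Nat.zero_le d), rfl⟩
  · rintro ⟨k, hk, rfl⟩
    exact ⟨by exact (Nat.mul_lt_mul_left hd).mpr hk, ⟨k, rfl⟩⟩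

lemma helperGeom {F : Type*} [Field F] [DecidableEq F] (y : F) (d c : ℕ) (hd : 0 < d)
    (hy : y ^ (d * c) = 1) :
    ∑ u ∈ (range (d * c)).filter (fun u => d ∣ u), y ^ u
      = if y ^ d = 1 then (c : F) else 0 := by
  rw [filterImage d c hd, Finset.sum_image (fun a _ b _ h => Nat.eq_of_mul_eq_mul_left hd h)]
  have h2 : ∀ k, y ^ (d * k) = (y ^ d) ^ k := fun k => pow_mul y d k
  simp_rw [h2]
  exact geomIf _ c (by rw [← pow_mul, hy])

lemma filterOddImage (c : ℕ) :
    (range (2 * c)).filter (fun u => ¬ 2 ∣ u) = (range c).image (fun j => 2 * j + 1) := by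
  ext u
  simp only [mem_filter, mem_range, mem_image]
  constructor
  · rintro ⟨hu, h2⟩
    exact ⟨u / 2, by omega, by omega⟩
  · rintro ⟨j, hj, rfl⟩
    exact ⟨by omega, by omega⟩

lemma sumUnitsPow {F : Type*} [Field F] [DecidableEq F] (ℓ m : ℕ) (hℓ : ℓ.Prime)
    (hℓodd : Odd ℓ) (hm : 0 < m) (y : F) (hy : y ^ (2 * ℓ ^ m) = 1) :
    ∑ u ∈ (range (2 * ℓ ^ m)).filter (Nat.Coprime (2 * ℓ ^ m)), y ^ u
      = (if y = 1 then ((2 * ℓ ^ m : ℕ) : F) else 0)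
        - (if y ^ 2 = 1 then ((ℓ ^ m : ℕ) : F) else 0)
        - (if y ^ ℓ = 1 then ((2 * ℓ ^ (m - 1) : ℕ) : F) else 0)
        + (if y ^ (2 * ℓ) = 1 then ((ℓ ^ (m - 1) : ℕ) : F) else 0) := by
  obtain ⟨m', rfl⟩ : ∃ m', m = m' + 1 := ⟨m - 1, (Nat.succ_pred_eq_of_pos hm).symm⟩
  have hm1 : (m' + 1) - 1 = m' := rfl
  have hℓ2 : ℓ ≠ 2 := by rintro rfl; simp [Nat.odd_iff] at hℓodd
  have hcop : ∀ u, Nat.Coprime (2 * ℓ ^ (m' + 1)) u ↔ ¬(2 ∣ u) ∧ ¬(ℓ ∣ u) := by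
    intro u
    rw [Nat.coprime_mul_iff_left, Nat.coprime_pow_left_iff (Nat.succ_pos m')]
    rw [Nat.Prime.coprime_iff_not_dvd Nat.prime_two, Nat.Prime.coprime_iff_not_dvd hℓ]
  have h2ℓ : ∀ u, 2 * ℓ ∣ u ↔ (2 ∣ u ∧ ℓ ∣ u) := by
    intro u
    constructor
    · intro h
      exact ⟨dvd_trans ⟨ℓ, rfl⟩ h, dvd_trans ⟨2, mul_comm 2 ℓ⟩ h⟩
    · rintro ⟨h2, h3⟩
      exact Nat.Coprime.mul_dvd_of_dvd_of_dvd
        ((Nat.Prime.coprime_iff_not_dvd Nat.prime_two).mpr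
          (fun h => hℓ2 ((Nat.prime_dvd_prime_iff_eq Nat.prime_two hℓ).mp h).symm)) h2 h3
  rw [Finset.sum_filter]
  have key : ∀ u ∈ range (2 * ℓ ^ (m' + 1)),
      (if Nat.Coprime (2 * ℓ ^ (m' + 1)) u then y ^ u else 0)
        = y ^ u - (if 2 ∣ u then y ^ u else 0) - (if ℓ ∣ u then y ^ u else 0)
          + (if 2 * ℓ ∣ u then y ^ u else 0) := by
    intro u _
    by_cases h2 : 2 ∣ u <;> by_cases h3 : ℓ ∣ u <;>
      simp [hcop u, h2ℓ u, h2, h3]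
  rw [Finset.sum_congr rfl key]
  rw [Finset.sum_add_distrib, Finset.sum_sub_distrib, Finset.sum_sub_distrib]
  rw [← Finset.sum_filter, ← Finset.sum_filter, ← Finset.sum_filter]
  have e2 : 2 * ℓ ^ (m' + 1) = ℓ * (2 * ℓ ^ m') := by ring
  have e3 : 2 * ℓ ^ (m' + 1) = (2 * ℓ) * (ℓ ^ m') := by ring
  have g0 := geomIf y (2 * ℓ ^ (m' + 1)) hy
  have g1 := helperGeom y 2 (ℓ ^ (m' + 1)) two_pos hy
  have g2 := helperGeom y ℓ (2 * ℓ ^ m') hℓ.pos (by rw [← e2]; exact hy)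
  have g3 := helperGeom y (2 * ℓ) (ℓ ^ m') (Nat.mul_pos two_pos hℓ.pos) (by rw [← e3]; exact hy)
  have g2' : ∑ a ∈ (range (2 * ℓ ^ (m' + 1))).filter (fun a => ℓ ∣ a), y ^ a
      = if y ^ ℓ = 1 then ((2 * ℓ ^ m' : ℕ) : F) else 0 := by rw [e2]; exact g2
  have g3' : ∑ a ∈ (range (2 * ℓ ^ (m' + 1))).filter (fun a => 2 * ℓ ∣ a), y ^ a
      = if y ^ (2 * ℓ) = 1 then ((ℓ ^ m' : ℕ) : F) else 0 := by rw [e3]; exact g3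
  rw [g0, g1, g2', g3']
  simp

lemma traceSumFrob (p : ℕ) (hp : p.Prime) (F : Type*) [Field F] [Fintype F]
    [Algebra (ZMod p) F] (e : ℕ) (he : 0 < e) (hq : Fintype.card F = p ^ e) (x : F) :
    algebraMap (ZMod p) F (Algebra.trace (ZMod p) F x) = ∑ j ∈ range e, x ^ p ^ j := by
  classical
  haveI : Fact p.Prime := ⟨hp⟩
  haveI : CharP F p := charP_of_injective_algebraMap (algebraMap (ZMod p) F).injective p
  have hcomm : ∀ r : ZMod p, (frobenius F p) (algebraMap (ZMod p) F r) = algebraMap (ZMod p) F r := by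
    intro r
    rw [frobenius_def, ← map_pow, ZMod.pow_card]
  let ψ : F →ₐ[ZMod p] F := { toRingHom := frobenius F p, commutes' := hcomm }
  have hbij : Function.Bijective ψ := by
    have : Function.Injective ψ := RingHom.injective (ψ : F →+* F)
    exact (Finite.injective_iff_bijective).mp this
  let φ : F ≃ₐ[ZMod p] F := AlgEquiv.ofBijective ψ hbij
  have hφ : ∀ y : F, φ y = y ^ p := fun y => rfl
  have hφpow : ∀ (j : ℕ) (y : F), (φ ^ j) y = y ^ p ^ j := by
    intro j
    induction j with
    | zero => intro y; simp
    | succ k ih =>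
      intro y
      rw [pow_succ, AlgEquiv.mul_apply, hφ, ih, ← pow_mul, pow_succ']
  have hφe : φ ^ e = 1 := by
    apply AlgEquiv.ext
    intro y
    rw [hφpow, AlgEquiv.one_apply, ← hq, FiniteField.pow_card]
  have hord : orderOf φ = e := by
    have hdvd : orderOf φ ∣ e := orderOf_dvd_of_pow_eq_one hφe
    have hpos : 0 < orderOf φ := by
      exact orderOf_pos φ
    refine le_antisymm (Nat.le_of_dvd he hdvd) ?_
    by_contra hlt
    push_neg at hlt
    set d := orderOf φ with hd
    have hall : ∀ y : F, y ^ p ^ d = y := by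
      intro y
      have := pow_orderOf_eq_one φ
      calc y ^ p ^ d = (φ ^ d) y := (hφpow d y).symm
        _ = y := by rw [this]; rfl
    have h1d : 1 < p ^ d := Nat.one_lt_pow hpos.ne' hp.one_lt
    set P : F[X] := X ^ p ^ d - X with hP
    have hPdeg : P.natDegree = p ^ d := FiniteField.X_pow_card_sub_X_natDegree_eq F h1d
    have hPne : P ≠ 0 := by
      intro h
      rw [h] at hPdeg
      simp at hPdeg
      omega
    have hsub : (Finset.univ : Finset F) ⊆ P.roots.toFinset := by
      intro y _
      rw [Multiset.mem_toFinset, mem_roots hPne]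
      simp [hP, hall y]
    have := Finset.card_le_card hsub
    have h2 := P.roots.toFinset_card_le
    have h3 := P.card_roots'
    rw [Finset.card_univ, hq, hPdeg] at *
    have : p ^ e ≤ p ^ d := by omega
    exact absurd this (by
      have := Nat.pow_lt_pow_right hp.one_lt hlt
      omega)
  have hcardAut : Fintype.card (F ≃ₐ[ZMod p] F) = e := by
    rw [Fintype.card_eq_nat_card, IsGalois.card_aut_eq_finrank]
    have hcard := Module.card_eq_pow_finrank (K := ZMod p) (V := F)
    rw [ZMod.card, hq] at hcard
    exact (Nat.pow_right_injective hp.two_le hcard.symm)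
  have himg : (range e).image (fun j => φ ^ j) = (Finset.univ : Finset (F ≃ₐ[ZMod p] F)) := by
    apply Finset.eq_univ_of_card
    rw [Finset.card_image_of_injOn ?hinj0, Finset.card_range, hcardAut]
    case hinj0 =>
    intro a ha b hb hab
    exact pow_injOn_Iio_orderOf (by simpa [hord] using Finset.mem_range.mp ha)
      (by simpa [hord] using Finset.mem_range.mp hb) hab
  rw [trace_eq_sum_automorphisms, ← himg, Finset.sum_image ?hinj]
  · exact Finset.sum_congr rfl fun j _ => hφpow j x
  · intro a ha b hb hab
    exact pow_injOn_Iio_orderOf (by simpa [hord] using Finset.mem_range.mp ha)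
      (by simpa [hord] using Finset.mem_range.mp hb) hab

end Helpers

/-- Explicit value of `S(a) = ∑_{i=0}^{2ℓ^m−1} χ(a·ξ^i)` for `a` in the
prime field `F_p` (Corollary 2.3 of the paper). -/
theorem statement_0 (p ℓ m : ℕ) (hp : p.Prime) (hpodd : Odd p)
    (hℓ : ℓ.Prime) (hℓodd : Odd ℓ) (hℓp : ℓ ≠ p) (hm : 0 < m)
    (hprim : orderOf ((p : ZMod (2 * ℓ ^ m))) = (2 * ℓ ^ m).totient)
    (F : Type*) [Field F] [Fintype F] [Algebra (ZMod p) F]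
    (hq : Fintype.card F = p ^ (2 * ℓ ^ m).totient)
    (g : F) (hg : ∀ x : F, x ≠ 0 → ∃ k : ℕ, x = g ^ k)
    (ξ : F) (hξ : ξ = g ^ ((Fintype.card F - 1) / (2 * ℓ ^ m)))
    (a : ZMod p) :
    (∑ i ∈ Finset.range (2 * ℓ ^ m),
        Complex.exp (2 * Real.pi * Complex.I / p) ^
          ((Algebra.trace (ZMod p) F (algebraMap (ZMod p) F a * ξ ^ i)).val : ℤ)) =
      Complex.exp (2 * Real.pi * Complex.I / p) ^ ((ℓ ^ (m - 1) * (ℓ - 1) * a.val : ℕ) : ℤ) +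
        Complex.exp (2 * Real.pi * Complex.I / p) ^ (-((ℓ ^ (m - 1) * (ℓ - 1) * a.val : ℕ) : ℤ)) +
        ((ℓ : ℂ) - 1) *
          (Complex.exp (2 * Real.pi * Complex.I / p) ^ ((ℓ ^ (m - 1) * a.val : ℕ) : ℤ) +
            Complex.exp (2 * Real.pi * Complex.I / p) ^ (-((ℓ ^ (m - 1) * a.val : ℕ) : ℤ))) +
        2 * (ℓ : ℂ) ^ m - 2 * ℓ := by
  classical
  haveI : Fact p.Prime := ⟨hp⟩
  obtain ⟨m', rfl⟩ : ∃ m', m = m' + 1 := ⟨m - 1, (Nat.succ_pred_eq_of_pos hm).symm⟩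
  simp only [Nat.add_sub_cancel]
  set n := 2 * ℓ ^ (m' + 1) with hn
  set e := (2 * ℓ ^ (m' + 1)).totient with he'
  set ζ : ℂ := Complex.exp (2 * Real.pi * Complex.I / p) with hζ
  have hppos := hp.pos
  have hp2 : p ≠ 2 := by rintro rfl; simp [Nat.odd_iff] at hpodd
  have hℓ2 : ℓ ≠ 2 := by rintro rfl; simp [Nat.odd_iff] at hℓodd
  have hp3 : 3 ≤ p := by have := hp.two_le; omega
  have npos : 0 < n := by have := hℓ.pos; positivity
  have he : 0 < e := Nat.totient_pos.mpr npos
  have hq1 : 1 < Fintype.card F := Fintype.one_lt_card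
  -- ζ facts
  have hζ0 : ζ ≠ 0 := Complex.exp_ne_zero _
  have hζp : ζ ^ (p : ℤ) = 1 := by
    rw [hζ, zpow_natCast, ← Complex.exp_nat_mul]
    have hpc : (p : ℂ) ≠ 0 := Nat.cast_ne_zero.mpr hppos.ne'
    rw [show (p : ℂ) * (2 * Real.pi * Complex.I / p) = 2 * Real.pi * Complex.I by
      field_simp]
    exact Complex.exp_two_pi_mul_I
  have hE : ∀ (x : ZMod p) (k : ℤ), ((k : ZMod p) = x) → ζ ^ ((x.val : ℕ) : ℤ) = ζ ^ k := by
    intro x k hk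
    have h1 : (((k - (x.val : ℤ)) : ℤ) : ZMod p) = 0 := by
      push_cast
      rw [hk]
      simp [ZMod.natCast_val, ZMod.cast_id]
    obtain ⟨c, hc⟩ := (ZMod.intCast_zmod_eq_zero_iff_dvd _ _).mp h1
    have : k = (x.val : ℤ) + (p : ℤ) * c := by omega
    rw [this, zpow_add₀ hζ0, zpow_mul, hζp, one_zpow, mul_one]
  -- n divides q - 1
  have hdvd : n ∣ Fintype.card F - 1 := by
    have h1 : ((p : ZMod n)) ^ e = 1 := by rw [← hprim]; exact pow_orderOf_eq_one _
    have h2 : ((Fintype.card F : ℕ) : ZMod n) = ((1 : ℕ) : ZMod n) := by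
      rw [hq]; push_cast [h1]; simp
    have h3 : 1 ≡ Fintype.card F [MOD n] := ((ZMod.natCast_eq_natCast_iff _ _ _).mp h2).symm
    exact (Nat.modEq_iff_dvd' (le_of_lt hq1)).mp h3
  -- g is a primitive root
  have hg0 : g ≠ 0 := by
    rintro rfl
    have hsub : (Finset.univ : Finset F) ⊆ {(0 : F), 1} := by
      intro x _
      rcases eq_or_ne x 0 with h | h
      · simp [h]
      · obtain ⟨k, hk⟩ := hg x h
        rcases Nat.eq_zero_or_pos k with h0 | h0
        · simp [hk, h0]
        · exfalso; apply h; rw [hk, zero_pow h0.ne']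
    have hcard2 := Finset.card_le_card hsub
    have h2 : ({(0 : F), 1} : Finset F).card ≤ 2 := Finset.card_insert_le _ _ |>.trans (by simp)
    rw [Finset.card_univ, hq] at hcard2
    have : p ≤ p ^ e := Nat.le_self_pow he.ne' p
    omega
  have hordg : orderOf g = Fintype.card F - 1 := by
    have hdvd' : orderOf g ∣ Fintype.card F - 1 :=
      orderOf_dvd_of_pow_eq_one (FiniteField.pow_card_sub_one_eq_one g hg0)
    have hfin : IsOfFinOrder g := isOfFinOrder_iff_pow_eq_one.mpr
      ⟨Fintype.card F - 1, by omega, FiniteField.pow_card_sub_one_eq_one g hg0⟩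
    have hpos : 0 < orderOf g := hfin.orderOf_pos
    have hle : Fintype.card F - 1 ≤ orderOf g := by
      have hsub : (Finset.univ.erase (0 : F)) ⊆ (range (orderOf g)).image (g ^ ·) := by
        intro x hx
        obtain ⟨k, hk⟩ := hg x (Finset.mem_erase.mp hx).1
        rw [Finset.mem_image]
        exact ⟨k % orderOf g, Finset.mem_range.mpr (Nat.mod_lt _ hpos),
          (pow_mod_orderOf g k).trans hk.symm⟩
      calc Fintype.card F - 1 = (Finset.univ.erase (0 : F)).card := by
            rw [Finset.card_erase_of_mem (Finset.mem_univ 0), Finset.card_univ]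
        _ ≤ ((range (orderOf g)).image (g ^ ·)).card := Finset.card_le_card hsub
        _ ≤ orderOf g := (Finset.card_image_le).trans (by rw [Finset.card_range])
    have h4 : orderOf g ≤ Fintype.card F - 1 := Nat.le_of_dvd (by omega) hdvd'
    omega
  have horderξ : orderOf ξ = n := by
    rw [hξ, ← hordg]
    exact orderOf_pow_orderOf_div (by omega) (hordg ▸ hdvd)
  have hξn : ξ ^ n = 1 := by rw [← horderξ]; exact pow_orderOf_eq_one ξ
  have hξpow1 : ∀ i : ℕ, (ξ ^ i = 1 ↔ n ∣ i) := by
    intro i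
    rw [← horderξ]
    exact (orderOf_dvd_iff_pow_eq_one).symm
  -- coprimality of p and n
  have hcopp : Nat.Coprime p n := by
    refine Nat.Coprime.mul_right ?_ (Nat.Coprime.pow_right _ ?_)
    · exact (Nat.coprime_primes hp Nat.prime_two).mpr hp2
    · exact (Nat.coprime_primes hp hℓ).mpr (fun h => hℓp h.symm)
  have hu : orderOf (ZMod.unitOfCoprime p hcopp : (ZMod n)ˣ) = e := by
    rw [← orderOf_units]
    simp only [ZMod.coe_unitOfCoprime]
    exact hprim
  have hinjOn : ∀ a ∈ range e, ∀ b ∈ range e, p ^ a % n = p ^ b % n → a = b := by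
    intro x hx y hy hxy
    have h1 : ((p : ZMod n)) ^ x = ((p : ZMod n)) ^ y := by
      have := congrArg (fun t : ℕ => (t : ZMod n)) hxy
      simpa [ZMod.natCast_mod, Nat.cast_pow] using this
    have h2 : (ZMod.unitOfCoprime p hcopp) ^ x = (ZMod.unitOfCoprime p hcopp) ^ y := by
      apply Units.ext
      push_cast [ZMod.coe_unitOfCoprime]
      exact h1
    exact pow_injOn_Iio_orderOf (by simpa [hu] using Finset.mem_range.mp hx)
      (by simpa [hu] using Finset.mem_range.mp hy) h2
  have himg : (range e).image (fun j => p ^ j % n)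
      = (range n).filter (Nat.Coprime n) := by
    apply Finset.eq_of_subset_of_card_le
    · intro u hu'
      obtain ⟨j, hj, rfl⟩ := Finset.mem_image.mp hu'
      refine Finset.mem_filter.mpr ⟨Finset.mem_range.mpr (Nat.mod_lt _ npos), ?_⟩
      have h1 : Nat.Coprime (p ^ j) n := hcopp.pow_left _
      have h3 : Nat.gcd (p ^ j % n) n = Nat.gcd n (p ^ j) := (Nat.gcd_rec n (p ^ j)).symm
      have h2 : Nat.Coprime (p ^ j % n) n := by
        unfold Nat.Coprime at *
        rw [h3, Nat.gcd_comm]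
        exact h1
      exact Nat.coprime_comm.mp h2
    · rw [Finset.card_image_of_injOn (fun x hx y hy => hinjOn x hx y hy), Finset.card_range]
      rw [← Nat.totient_eq_card_coprime]
  -- trace values
  have traceXi : ∀ i : ℕ, algebraMap (ZMod p) F (Algebra.trace (ZMod p) F (ξ ^ i))
      = (if n ∣ i then ((n : ℕ) : F) else 0)
        - (if ℓ ^ (m' + 1) ∣ i then ((ℓ ^ (m' + 1) : ℕ) : F) else 0)
        - (if 2 * ℓ ^ m' ∣ i then ((2 * ℓ ^ m' : ℕ) : F) else 0)
        + (if ℓ ^ m' ∣ i then ((ℓ ^ m' : ℕ) : F) else 0) := by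
    intro i
    rw [traceSumFrob p hp F e he hq]
    have hyn : (ξ ^ i) ^ n = 1 := by
      rw [← pow_mul, mul_comm, pow_mul, hξn, one_pow]
    have hstep1 : ∀ j : ℕ, (ξ ^ i) ^ (p ^ j) = (ξ ^ i) ^ (p ^ j % n) := by
      intro j
      conv_lhs => rw [← Nat.div_add_mod (p ^ j) n]
      rw [pow_add, pow_mul, hyn, one_pow, one_mul]
    have c1 : (ξ ^ i = 1) = (n ∣ i) := propext (hξpow1 i)
    have c2 : ((ξ ^ i) ^ 2 = 1) = (ℓ ^ (m' + 1) ∣ i) := by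
      rw [← pow_mul, hξpow1 (i * 2), mul_comm i 2, hn]
      exact propext (Nat.mul_dvd_mul_iff_left two_pos)
    have c3 : ((ξ ^ i) ^ ℓ = 1) = (2 * ℓ ^ m' ∣ i) := by
      rw [← pow_mul, hξpow1 (i * ℓ), hn, show 2 * ℓ ^ (m' + 1) = 2 * ℓ ^ m' * ℓ by ring]
      exact propext (Nat.mul_dvd_mul_iff_right hℓ.pos)
    have c4 : ((ξ ^ i) ^ (2 * ℓ) = 1) = (ℓ ^ m' ∣ i) := by
      rw [← pow_mul, hξpow1 (i * (2 * ℓ)), hn,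
        show 2 * ℓ ^ (m' + 1) = ℓ ^ m' * (2 * ℓ) by ring]
      exact propext (Nat.mul_dvd_mul_iff_right (Nat.mul_pos two_pos hℓ.pos))
    calc ∑ j ∈ range e, (ξ ^ i) ^ p ^ j
        = ∑ j ∈ range e, (ξ ^ i) ^ (p ^ j % n) := Finset.sum_congr rfl (fun j _ => hstep1 j)
      _ = ∑ u ∈ (range n).filter (Nat.Coprime n), (ξ ^ i) ^ u := by
          rw [← himg, Finset.sum_image (fun x hx y hy => hinjOn x hx y hy)]
      _ = _ := by
          rw [sumUnitsPow ℓ (m' + 1) hℓ hℓodd (Nat.succ_pos m') (ξ ^ i) hyn]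
          simp only [Nat.add_sub_cancel, c1, c2, c3, c4]
          rfl
  -- full trace with the prime-field scalar
  have traceFull : ∀ i : ℕ, (Algebra.trace (ZMod p) F (algebraMap (ZMod p) F a * ξ ^ i))
      = a * ((((if n ∣ i then ((2 * ℓ ^ (m' + 1) : ℕ) : ℤ) else 0)
        - (if ℓ ^ (m' + 1) ∣ i then ((ℓ ^ (m' + 1) : ℕ) : ℤ) else 0)
        - (if 2 * ℓ ^ m' ∣ i then ((2 * ℓ ^ m' : ℕ) : ℤ) else 0)
        + (if ℓ ^ m' ∣ i then ((ℓ ^ m' : ℕ) : ℤ) else 0) : ℤ) : ZMod p)) := by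
    intro i
    have h1 : algebraMap (ZMod p) F a * ξ ^ i = a • (ξ ^ i) := (Algebra.smul_def a (ξ ^ i)).symm
    rw [h1, map_smul, smul_eq_mul]
    congr 1
    apply (algebraMap (ZMod p) F).injective
    rw [traceXi i, map_intCast]
    rw [hn]
    split_ifs <;> push_cast <;> ring
  set T : ℕ → ℤ := fun i =>
      (if n ∣ i then ((2 * ℓ ^ (m' + 1) : ℕ) : ℤ) else 0)
        - (if ℓ ^ (m' + 1) ∣ i then ((ℓ ^ (m' + 1) : ℕ) : ℤ) else 0)
        - (if 2 * ℓ ^ m' ∣ i then ((2 * ℓ ^ m' : ℕ) : ℤ) else 0)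
        + (if ℓ ^ m' ∣ i then ((ℓ ^ m' : ℕ) : ℤ) else 0) with hT
  have hsummand : ∀ i : ℕ,
      ζ ^ (((Algebra.trace (ZMod p) F (algebraMap (ZMod p) F a * ξ ^ i)).val : ℕ) : ℤ)
        = ζ ^ ((a.val : ℤ) * T i) := by
    intro i
    apply hE
    have hTi : T i = (if n ∣ i then ((2 * ℓ ^ (m' + 1) : ℕ) : ℤ) else 0)
        - (if ℓ ^ (m' + 1) ∣ i then ((ℓ ^ (m' + 1) : ℕ) : ℤ) else 0)
        - (if 2 * ℓ ^ m' ∣ i then ((2 * ℓ ^ m' : ℕ) : ℤ) else 0)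
        + (if ℓ ^ m' ∣ i then ((ℓ ^ m' : ℕ) : ℤ) else 0) := rfl
    rw [traceFull i, hTi]
    split_ifs <;> push_cast [ZMod.natCast_val, ZMod.cast_id] <;> ring
  have hLHS : (∑ i ∈ range n,
      ζ ^ (((Algebra.trace (ZMod p) F (algebraMap (ZMod p) F a * ξ ^ i)).val : ℕ) : ℤ))
      = ∑ i ∈ range n, ζ ^ ((a.val : ℤ) * T i) :=
    Finset.sum_congr rfl fun i _ => hsummand i
  rw [hLHS]
  -- split off the non-multiples of ℓ ^ m'
  rw [← Finset.sum_filter_add_sum_filter_not (range n) (fun i => ℓ ^ m' ∣ i)]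
  have hnfact : n = ℓ ^ m' * (2 * ℓ) := by rw [hn]; ring
  have hℓm'pos : 0 < ℓ ^ m' := pow_pos hℓ.pos m'
  -- the trivial part
  have hrest : ∀ i ∈ (range n).filter (fun i => ¬ ℓ ^ m' ∣ i), ζ ^ ((a.val : ℤ) * T i) = 1 := by
    intro i hi
    have hnd := (Finset.mem_filter.mp hi).2
    have d1 : ¬ n ∣ i := fun h => hnd ((Dvd.intro (2 * ℓ) hnfact.symm).trans h)
    have d2 : ¬ ℓ ^ (m' + 1) ∣ i := fun h => hnd ((pow_dvd_pow ℓ (Nat.le_succ m')).trans h)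
    have d3 : ¬ 2 * ℓ ^ m' ∣ i := fun h => hnd ((dvd_mul_left (ℓ ^ m') 2).trans h)
    rw [hT]
    simp only [if_neg d1, if_neg d2, if_neg d3, if_neg hnd]
    norm_num
  have hcard1 : ((range n).filter (fun i => ℓ ^ m' ∣ i)).card = 2 * ℓ := by
    rw [hnfact, filterImage _ _ hℓm'pos,
      Finset.card_image_of_injective _ (fun x y h => Nat.eq_of_mul_eq_mul_left hℓm'pos h),
      Finset.card_range]
  have hcard2 : ((range n).filter (fun i => ¬ ℓ ^ m' ∣ i)).card = n - 2 * ℓ := by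
    have := Finset.card_filter_add_card_filter_not
      (s := range n) (p := fun i => ℓ ^ m' ∣ i)
    rw [Finset.card_range] at this
    omega
  have hrestsum : ∑ i ∈ (range n).filter (fun i => ¬ ℓ ^ m' ∣ i), ζ ^ ((a.val : ℤ) * T i)
      = ((n - 2 * ℓ : ℕ) : ℂ) := by
    rw [Finset.sum_congr rfl hrest, Finset.sum_const, hcard2, nsmul_eq_mul, mul_one]
  rw [hrestsum]
  -- the multiples of ℓ ^ m'
  have himg2 : (range n).filter (fun i => ℓ ^ m' ∣ i)
      = (range (2 * ℓ)).image (fun k => ℓ ^ m' * k) := by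
    rw [hnfact]; exact filterImage _ _ hℓm'pos
  rw [himg2, Finset.sum_image (fun x _ y _ h => Nat.eq_of_mul_eq_mul_left hℓm'pos h)]
  -- conditions for multiples
  have hck : ∀ k : ℕ, T (ℓ ^ m' * k)
      = (if 2 * ℓ ∣ k then ((2 * ℓ ^ (m' + 1) : ℕ) : ℤ) else 0)
        - (if ℓ ∣ k then ((ℓ ^ (m' + 1) : ℕ) : ℤ) else 0)
        - (if 2 ∣ k then ((2 * ℓ ^ m' : ℕ) : ℤ) else 0) + ((ℓ ^ m' : ℕ) : ℤ) := by
    intro k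
    have e1 : (n ∣ ℓ ^ m' * k) = (2 * ℓ ∣ k) := by
      rw [hnfact]; exact propext (Nat.mul_dvd_mul_iff_left hℓm'pos)
    have e2 : (ℓ ^ (m' + 1) ∣ ℓ ^ m' * k) = (ℓ ∣ k) := by
      rw [pow_succ]; exact propext (Nat.mul_dvd_mul_iff_left hℓm'pos)
    have e3 : (2 * ℓ ^ m' ∣ ℓ ^ m' * k) = (2 ∣ k) := by
      rw [mul_comm 2 (ℓ ^ m')]; exact propext (Nat.mul_dvd_mul_iff_left hℓm'pos)
    rw [hT]
    simp only [e1, e2, e3, if_pos (dvd_mul_right (ℓ ^ m') k)]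
  -- exponents matching the statement
  set A1 : ℤ := ((ℓ ^ m' * a.val : ℕ) : ℤ) with hA1
  set A2 : ℤ := ((ℓ ^ m' * (ℓ - 1) * a.val : ℕ) : ℤ) with hA2
  have hA2' : A2 = (a.val : ℤ) * (ℓ ^ (m' + 1) - ℓ ^ m') := by
    rw [hA2]
    push_cast [Nat.cast_sub hℓ.one_le]
    ring
  -- split evens and odds
  rw [← Finset.sum_filter_add_sum_filter_not (range (2 * ℓ)) (fun k => 2 ∣ k)]
  have hcop2 : Nat.Coprime ℓ 2 := (Nat.coprime_primes hℓ Nat.prime_two).mpr hℓ2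
  -- even part
  have hevensum : ∑ k ∈ (range (2 * ℓ)).filter (fun k => 2 ∣ k),
      ζ ^ ((a.val : ℤ) * T (ℓ ^ m' * k)) = ζ ^ A2 + ((ℓ - 1 : ℕ) : ℂ) * ζ ^ (-A1) := by
    rw [filterImage 2 ℓ two_pos,
      Finset.sum_image (fun x _ y _ h => Nat.eq_of_mul_eq_mul_left two_pos h)]
    have heven : ∀ j ∈ range ℓ, ζ ^ ((a.val : ℤ) * T (ℓ ^ m' * (2 * j)))
        = if j = 0 then ζ ^ A2 else ζ ^ (-A1) := by
      intro j hj
      have hjℓ : j < ℓ := Finset.mem_range.mp hj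
      have hdl : (ℓ ∣ 2 * j) ↔ (j = 0) := by
        constructor
        · intro h
          have := hcop2.dvd_of_dvd_mul_left h
          exact Nat.eq_zero_of_dvd_of_lt this hjℓ
        · rintro rfl; simp
      have hdl2 : (2 * ℓ ∣ 2 * j) ↔ (j = 0) := by
        rw [Nat.mul_dvd_mul_iff_left two_pos]
        exact ⟨fun h => Nat.eq_zero_of_dvd_of_lt h hjℓ, by rintro rfl; simp⟩
      rw [hck]
      by_cases h0 : j = 0
      · subst h0
        rw [if_pos (hdl2.mpr rfl), if_pos (hdl.mpr rfl), if_pos (dvd_mul_right 2 0), if_pos rfl]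
        congr 1
        rw [hA2']
        push_cast
        ring
      · rw [if_neg (fun h => h0 (hdl2.mp h)), if_neg (fun h => h0 (hdl.mp h)),
          if_pos (dvd_mul_right 2 j), if_neg h0]
        congr 1
        rw [hA1]
        push_cast
        ring
    rw [Finset.sum_congr rfl heven,
      ← Finset.add_sum_erase _ _ (Finset.mem_range.mpr hℓ.pos), if_pos rfl]
    have : ∀ j ∈ (range ℓ).erase 0, (if j = 0 then ζ ^ A2 else ζ ^ (-A1)) = ζ ^ (-A1) :=
      fun j hj => if_neg (Finset.mem_erase.mp hj).1
    rw [Finset.sum_congr rfl this, Finset.sum_const,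
      Finset.card_erase_of_mem (Finset.mem_range.mpr hℓ.pos), Finset.card_range,
      nsmul_eq_mul]
  -- odd part
  have hoddsum : ∑ k ∈ (range (2 * ℓ)).filter (fun k => ¬ 2 ∣ k),
      ζ ^ ((a.val : ℤ) * T (ℓ ^ m' * k)) = ζ ^ (-A2) + ((ℓ - 1 : ℕ) : ℂ) * ζ ^ A1 := by
    rw [filterOddImage ℓ, Finset.sum_image (fun x _ y _ h => by omega)]
    have hj0 : (ℓ - 1) / 2 ∈ range ℓ := Finset.mem_range.mpr (by have := hℓ.pos; omega)
    have hℓo : ℓ % 2 = 1 := Nat.odd_iff.mp hℓodd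
    have hodd : ∀ j ∈ range ℓ, ζ ^ ((a.val : ℤ) * T (ℓ ^ m' * (2 * j + 1)))
        = if j = (ℓ - 1) / 2 then ζ ^ (-A2) else ζ ^ A1 := by
      intro j hj
      have hjℓ : j < ℓ := Finset.mem_range.mp hj
      have h2d : ¬ 2 ∣ 2 * j + 1 := by omega
      have h2ld : ¬ 2 * ℓ ∣ 2 * j + 1 := fun h => h2d ((dvd_mul_right 2 ℓ).trans h)
      have hld : (ℓ ∣ 2 * j + 1) ↔ (j = (ℓ - 1) / 2) := by
        constructor
        · rintro ⟨t, ht⟩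
          have ht2 : t < 2 := by
            by_contra hc
            push_neg at hc
            have : ℓ * 2 ≤ ℓ * t := Nat.mul_le_mul_left ℓ hc
            omega
          interval_cases t <;> omega
        · intro h
          have : 2 * j + 1 = ℓ := by omega
          rw [this]
      rw [hck]
      by_cases h0 : j = (ℓ - 1) / 2
      · rw [if_neg h2ld, if_pos (hld.mpr h0), if_neg h2d]
        rw [if_pos h0]
        congr 1
        rw [hA2']
        push_cast
        ring
      · rw [if_neg h2ld, if_neg (fun h => h0 (hld.mp h)), if_neg h2d, if_neg h0]
        congr 1
        rw [hA1]
        push_cast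
        ring
    rw [Finset.sum_congr rfl hodd, ← Finset.add_sum_erase _ _ hj0, if_pos rfl]
    have : ∀ j ∈ (range ℓ).erase ((ℓ - 1) / 2),
        (if j = (ℓ - 1) / 2 then ζ ^ (-A2) else ζ ^ A1) = ζ ^ A1 :=
      fun j hj => if_neg (Finset.mem_erase.mp hj).1
    rw [Finset.sum_congr rfl this, Finset.sum_const,
      Finset.card_erase_of_mem hj0, Finset.card_range, nsmul_eq_mul]
  rw [hevensum, hoddsum]
  -- final arithmetic
  have h2ln : 2 * ℓ ≤ n := by
    rw [hnfact]
    calc 2 * ℓ = 1 * (2 * ℓ) := (one_mul _).symm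
    _ ≤ ℓ ^ m' * (2 * ℓ) := Nat.mul_le_mul_right _ hℓm'pos
  rw [Nat.cast_sub h2ln, Nat.cast_sub hℓ.one_le]
  rw [hn]
  push_cast
  ring
end

section
/- Let β ∈ F_q^*. If d ≤ (2 − 4/√5)^{1/2}·q^{1/4} (equivalently d² ≤ (2 − 4/√5)·√q), then for any integers j₁, j₂ with 0 ≤ j₁, j₂ ≤ q−2 there exists γ ∈ F_q^* with γ ≠ β and γ ≠ −β such that β + γ ∈ C_{j₁} and β − γ ∈ C_{j₂}. -/
open Finset Complex

section Aux

variable {F : Type*} [Field F] [Fintype F]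

omit [Fintype F] in
lemma conj_mulChar {d : ℕ} (hd : d ≠ 0) (χ : MulChar F ℂ) (hχ : χ ^ d = 1) (x : F) :
    (starRingEnd ℂ) (χ x) = χ⁻¹ x := by
  rcases eq_or_ne x 0 with rfl | hx
  · rw [χ.map_zero, χ⁻¹.map_zero, map_zero]
  · have hu : IsUnit x := isUnit_iff_ne_zero.mpr hx
    have h1 : χ x ^ d = 1 := by
      rw [← MulChar.pow_apply' χ hd, hχ, MulChar.one_apply hu]
    have hn : ‖χ x‖ = 1 := Complex.norm_eq_one_of_pow_eq_one h1 hd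
    rw [MulChar.inv_apply_eq_inv', ← Complex.inv_eq_conj hn]

lemma conj_jacobiSum {d : ℕ} (hd : d ≠ 0) (χ φ : MulChar F ℂ) (hχ : χ ^ d = 1) (hφ : φ ^ d = 1) :
    (starRingEnd ℂ) (jacobiSum χ φ) = jacobiSum χ⁻¹ φ⁻¹ := by
  rw [jacobiSum, map_sum]
  refine Finset.sum_congr rfl fun x _ ↦ ?_
  rw [map_mul, conj_mulChar hd χ hχ, conj_mulChar hd φ hφ]

omit [Fintype F] in
lemma norm_mulChar_eq_one {d : ℕ} (hd : d ≠ 0) (χ : MulChar F ℂ) (hχd : χ ^ d = 1)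
    {x : F} (hx : x ≠ 0) : ‖χ x‖ = 1 := by
  have hu : IsUnit x := isUnit_iff_ne_zero.mpr hx
  have h1 : χ x ^ d = 1 := by
    rw [← MulChar.pow_apply' χ hd, hχd, MulChar.one_apply hu]
  exact Complex.norm_eq_one_of_pow_eq_one h1 hd

lemma norm_jacobiSum_le {q d : ℕ} (hq : Fintype.card F = q) (hd : d ≠ 0)
    (χ φ : MulChar F ℂ) (hχd : χ ^ d = 1) (hφd : φ ^ d = 1) (h : ¬(χ = 1 ∧ φ = 1)) :
    ‖jacobiSum χ φ‖ ≤ Real.sqrt q := by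
  have hq1 : (1:ℝ) ≤ q := by
    have := Fintype.one_lt_card (α := F)
    rw [hq] at this; exact_mod_cast this.le
  have h1q : (1:ℝ) ≤ Real.sqrt q := by
    rw [show (1:ℝ) = Real.sqrt 1 by simp]
    exact Real.sqrt_le_sqrt hq1
  by_cases hχ : χ = 1
  · have hφ : φ ≠ 1 := fun hh => h ⟨hχ, hh⟩
    subst hχ
    rw [jacobiSum_one_nontrivial hφ]
    simpa using h1q
  by_cases hφ : φ = 1
  · subst hφ
    rw [jacobiSum_comm, jacobiSum_one_nontrivial hχ]
    simpa using h1q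
  by_cases hχφ : χ * φ = 1
  · have hinv : φ = χ⁻¹ := eq_inv_of_mul_eq_one_left (by rwa [mul_comm] at hχφ)
    subst hinv
    rw [jacobiSum_nontrivial_inv hχ]
    have h1 : χ (-1) ^ d = 1 := by
      rw [← MulChar.pow_apply' χ hd, hχd, MulChar.one_apply (by exact isUnit_one.neg)]
    have := Complex.norm_eq_one_of_pow_eq_one h1 hd
    rw [norm_neg, this]; exact h1q
  · have hcc : ringChar ℂ ≠ ringChar F := by
      have h0 : ringChar ℂ = 0 := ringChar.eq_zero
      have : ringChar F ≠ 0 := CharP.ringChar_ne_zero_of_finite F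
      omega
    have hJ := jacobiSum_mul_jacobiSum_inv hcc hχ hφ hχφ
    rw [← conj_jacobiSum hd χ φ hχd hφd, Complex.mul_conj, hq] at hJ
    have hns : Complex.normSq (jacobiSum χ φ) = q := by exact_mod_cast hJ
    rw [Complex.norm_def, hns]

lemma sum_shift {β : F} (h2β : 2*β ≠ 0) (χ φ : MulChar F ℂ) :
    ∑ γ : F, χ (β+γ) * φ (β-γ) = (χ (2*β) * φ (2*β)) * jacobiSum χ φ := by
  rw [jacobiSum, mul_sum]
  refine (Fintype.sum_equiv ((Equiv.mulLeft₀ (2*β) h2β).trans (Equiv.subRight β)) _ _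
    fun t ↦ ?_).symm
  simp only [Equiv.trans_apply, Equiv.mulLeft₀_apply, Equiv.subRight_apply]
  rw [show β + (2*β*t - β) = (2*β)*t by ring, show β - (2*β*t - β) = (2*β)*(1-t) by ring,
    map_mul χ (2*β) t, map_mul φ (2*β) (1-t)]
  ring

lemma norm_S_le {q d : ℕ} (hq : Fintype.card F = q) (hd : d ≠ 0) {β : F} (h2β : 2*β ≠ 0)
    (χ φ : MulChar F ℂ) (hχd : χ ^ d = 1) (hφd : φ ^ d = 1) (h : ¬(χ = 1 ∧ φ = 1)) :
    ‖∑ γ : F, χ (β+γ) * φ (β-γ)‖ ≤ Real.sqrt q := by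
  rw [sum_shift h2β, norm_mul, norm_mul, norm_mulChar_eq_one hd χ hχd h2β,
    norm_mulChar_eq_one hd φ hφd h2β, one_mul, one_mul]
  exact norm_jacobiSum_le hq hd χ φ hχd hφd h

end Aux

noncomputable def primChar {F : Type*} [Field F] [DecidableEq F] (g : F) (ζ : ℂ)
    (hg : ∀ x : F, x ≠ 0 → ∃ k : ℕ, x = g ^ k)
    (key : ∀ a b : ℕ, g ^ a = g ^ b → ζ ^ a = ζ ^ b) : MulChar F ℂ where
  toFun := fun x => if hx : x = 0 then 0 else ζ ^ (hg x hx).choose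
  map_one' := by
    simp only [dif_neg one_ne_zero]
    have h1 : g ^ (hg 1 one_ne_zero).choose = g ^ 0 := by
      rw [pow_zero]; exact ((hg 1 one_ne_zero).choose_spec).symm
    rw [key _ _ h1, pow_zero]
  map_mul' := by
    intro x y
    rcases eq_or_ne x 0 with rfl | hx
    · simp
    rcases eq_or_ne y 0 with rfl | hy
    · simp
    have hxy : x * y ≠ 0 := mul_ne_zero hx hy
    simp only [dif_neg hxy, dif_neg hx, dif_neg hy]
    rw [← pow_add]
    apply key
    rw [pow_add, ← (hg x hx).choose_spec, ← (hg y hy).choose_spec]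
    exact (hg (x*y) hxy).choose_spec.symm
  map_nonunit' := by
    intro a ha
    simp only [dif_pos (by simpa [isUnit_iff_ne_zero] using ha : a = (0:F))]

lemma primChar_pow {F : Type*} [Field F] [DecidableEq F] (g : F) (ζ : ℂ) (hg0 : g ≠ 0)
    (hg : ∀ x : F, x ≠ 0 → ∃ k : ℕ, x = g ^ k)
    (key : ∀ a b : ℕ, g ^ a = g ^ b → ζ ^ a = ζ ^ b) (k : ℕ) :
    primChar g ζ hg key (g ^ k) = ζ ^ k := by
  have hk : g ^ k ≠ 0 := pow_ne_zero k hg0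
  show (if hx : g ^ k = 0 then 0 else ζ ^ (hg _ hx).choose) = ζ ^ k
  rw [dif_neg hk]
  exact key _ _ ((hg (g^k) hk).choose_spec).symm

lemma numeric_ineq {d q : ℕ} (hd : 1 ≤ d)
    (hsmall : (d : ℝ)^2 ≤ (2 - 4 / Real.sqrt 5) * Real.sqrt q) :
    (d:ℝ)^2 < (q:ℝ) - 2 - ((d:ℝ)^2 - 1) * Real.sqrt q := by
  set x := Real.sqrt q with hxdef
  have hx0 : 0 ≤ x := Real.sqrt_nonneg _
  have hx2 : x^2 = q := Real.sq_sqrt (by positivity)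
  have h5 : Real.sqrt 5 ≤ 2.3 := by
    rw [show (2.3:ℝ) = Real.sqrt (2.3^2) by rw [Real.sqrt_sq (by norm_num)]]
    exact Real.sqrt_le_sqrt (by norm_num)
  have h5b : (2:ℝ) ≤ Real.sqrt 5 := by
    rw [show (2:ℝ) = Real.sqrt (2^2) by rw [Real.sqrt_sq (by norm_num)]]
    exact Real.sqrt_le_sqrt (by norm_num)
  have hc : 2 - 4 / Real.sqrt 5 ≤ 0.27 := by
    have h1 : (4:ℝ)/2.3 ≤ 4 / Real.sqrt 5 := by
      apply div_le_div_of_nonneg_left (by norm_num) (by linarith) h5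
    linarith
  have hd1 : (1:ℝ) ≤ (d:ℝ)^2 := by
    have : (1:ℝ) ≤ (d:ℝ) := by exact_mod_cast hd
    nlinarith
  have hdx : (d:ℝ)^2 ≤ 0.27 * x := by
    refine le_trans hsmall ?_
    have : 2 - 4 / Real.sqrt 5 ≤ 0.27 := hc
    nlinarith
  have hx37 : 3.7 ≤ x := by nlinarith
  rw [← hx2]
  nlinarith [mul_le_mul_of_nonneg_right hdx (show (0:ℝ) ≤ 1 + x by linarith),
    mul_le_mul_of_nonneg_right hx37 hx0]


/-- Lemma 2.5 of the paper. If `d² ≤ (2 − 4/√5)·√q`, then for any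
`0 ≤ j₁, j₂ ≤ q−2` there is `γ ∈ F_q^* ∖ {±β}` with `β + γ ∈ C_{j₁}` and `β − γ ∈ C_{j₂}`. -/
theorem statement_2 (F : Type*) [Field F] [Fintype F]
    (q : ℕ) (hq : Fintype.card F = q) (hqpp : IsPrimePow q) (hqodd : Odd q) (hq3 : q ≠ 3)
    (g : F) (hg : ∀ x : F, x ≠ 0 → ∃ k : ℕ, x = g ^ k)
    (d : ℕ) (hd : 0 < d) (hdvd : d ∣ q - 1)
    (hsmall : (d : ℝ) ^ 2 ≤ (2 - 4 / Real.sqrt 5) * Real.sqrt q)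
    (β : F) (hβ : β ≠ 0) :
    ∀ j₁ j₂ : ℕ, j₁ ≤ q - 2 → j₂ ≤ q - 2 →
      ∃ γ : F, γ ≠ 0 ∧ γ ≠ β ∧ γ ≠ -β ∧
        (∃ x : F, x ≠ 0 ∧ β + γ = g ^ j₁ * x ^ d) ∧
        (∃ x : F, x ≠ 0 ∧ β - γ = g ^ j₂ * x ^ d) := by
  intro j₁ j₂ _ _
  classical
  have hd0 : d ≠ 0 := hd.ne'
  have hq2 : 2 ≤ q := by rw [← hq]; exact Fintype.one_lt_card
  have hq3' : 3 ≤ q := by rcases hqodd with ⟨m, hm⟩; omega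
  -- g is nonzero
  have hg0 : g ≠ 0 := by
    have hne : ((Finset.univ : Finset F) \ {0, 1}).Nonempty := by
      rw [← Finset.card_pos, Finset.card_sdiff_of_subset (Finset.subset_univ _)]
      have h01 : ({0, 1} : Finset F).card = 2 := Finset.card_pair zero_ne_one
      rw [Finset.card_univ, hq, h01]; omega
    obtain ⟨z, hz⟩ := hne
    simp only [Finset.mem_sdiff, Finset.mem_univ, Finset.mem_insert, Finset.mem_singleton,
      true_and, not_or] at hz
    obtain ⟨hz0, hz1⟩ := hz
    obtain ⟨k, hk⟩ := hg z hz0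
    intro hgz
    subst hgz
    rcases Nat.eq_zero_or_pos k with rfl | hkpos
    · rw [pow_zero] at hk; exact hz1 hk
    · rw [zero_pow hkpos.ne'] at hk; exact hz0 hk
  -- 2 ≠ 0 in F
  have h2F : (2 : F) ≠ 0 := by
    intro h2
    have hcast : ((q : ℕ) : F) = 0 := by rw [← hq]; exact FiniteField.cast_card_eq_zero F
    rcases hqodd with ⟨m, hm⟩
    rw [hm] at hcast
    push_cast at hcast
    rw [h2] at hcast
    simp at hcast
  have h2β : 2 * β ≠ 0 := mul_ne_zero h2F hβ
  -- the unit corresponding to g and its order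
  set gu : Fˣ := Units.mk0 g hg0 with hgu_def
  have hgu_val : ∀ k : ℕ, ((gu ^ k : Fˣ) : F) = g ^ k := fun k => by
    rw [Units.val_pow_eq_pow_val]; rfl
  have hmem : ∀ x : Fˣ, x ∈ Subgroup.zpowers gu := by
    intro x
    obtain ⟨k, hk⟩ := hg (x : F) x.ne_zero
    refine ⟨(k : ℤ), ?_⟩
    show gu ^ (k : ℤ) = x
    rw [zpow_natCast]
    exact Units.ext (by rw [hgu_val k, ← hk])
  have hord : orderOf gu = q - 1 := by
    rw [orderOf_eq_card_of_forall_mem_zpowers hmem, Nat.card_eq_fintype_card,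
      Fintype.card_units, hq]
  -- the primitive d-th root of unity
  set ζ : ℂ := Complex.exp (2 * Real.pi * Complex.I / d) with hζdef
  have hζ : IsPrimitiveRoot ζ d := Complex.isPrimitiveRoot_exp d hd0
  have hred : ∀ a : ℕ, ζ ^ a = ζ ^ (a % d) := by
    intro a
    conv_lhs => rw [← Nat.div_add_mod a d]
    rw [pow_add, pow_mul, hζ.pow_eq_one, one_pow, one_mul]
  -- key coherence
  have key : ∀ a b : ℕ, g ^ a = g ^ b → ζ ^ a = ζ ^ b := by
    intro a b hab
    have hu : gu ^ a = gu ^ b := Units.ext (by rw [hgu_val, hgu_val]; exact hab)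
    rw [pow_eq_pow_iff_modEq, hord] at hu
    have hmod : a % d = b % d := hu.of_dvd hdvd
    rw [hred a, hred b, hmod]
  -- the character
  set χ1 : MulChar F ℂ := primChar g ζ hg key with hχ1def
  have hχ1 : ∀ k : ℕ, χ1 (g ^ k) = ζ ^ k := primChar_pow g ζ hg0 hg key
  have hval : ∀ y : F, y ≠ 0 → χ1 y ^ d = 1 := by
    intro y hy
    obtain ⟨k, rfl⟩ := hg y hy
    rw [hχ1, ← pow_mul, mul_comm, pow_mul, hζ.pow_eq_one, one_pow]
  have hχ1d : χ1 ^ d = 1 := by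
    apply MulChar.ext
    intro a
    rw [MulChar.pow_apply_coe, MulChar.one_apply_coe]
    exact hval a a.ne_zero
  have hχ1md : ∀ m : ℕ, (χ1 ^ m) ^ d = 1 := by
    intro m
    rw [← pow_mul, mul_comm, pow_mul, hχ1d, one_pow]
  have hnt : ∀ m : ℕ, 0 < m → m < d → χ1 ^ m ≠ 1 := by
    intro m hm0 hmd heq
    have h1 : (χ1 ^ m) g = ζ ^ m := by
      rw [MulChar.pow_apply' χ1 hm0.ne' g]
      congr 1
      rw [show g = g ^ 1 by rw [pow_one], hχ1 1, pow_one]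
    rw [heq, MulChar.one_apply (isUnit_iff_ne_zero.mpr hg0)] at h1
    exact hζ.pow_ne_one_of_pos_of_lt hm0.ne' hmd h1.symm
  -- the class membership criterion
  have hiff : ∀ (j : ℕ) (y : F), y ≠ 0 →
      (χ1 y = χ1 (g ^ j) ↔ ∃ x : F, x ≠ 0 ∧ y = g ^ j * x ^ d) := by
    intro j y hy
    obtain ⟨k, rfl⟩ := hg y hy
    rw [hχ1, hχ1]
    constructor
    · intro hzk
      rw [hred k, hred j] at hzk
      have hkj : k ≡ j [MOD d] :=
        hζ.pow_inj (Nat.mod_lt _ hd) (Nat.mod_lt _ hd) hzk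
      obtain ⟨m, hm⟩ := Nat.modEq_iff_dvd.mp hkj
      refine ⟨((gu ^ (-m) : Fˣ) : F), Units.ne_zero _, ?_⟩
      have hexp : (k : ℤ) = (j : ℤ) + (-m) * d := by linear_combination -hm
      have huu : gu ^ (k : ℤ) = gu ^ (j : ℤ) * (gu ^ (-m)) ^ (d : ℕ) := by
        rw [← zpow_natCast (gu ^ (-m)) d, ← zpow_mul, ← zpow_add, ← hexp]
      have := congrArg (Units.val) huu
      rw [zpow_natCast, zpow_natCast] at this
      rw [Units.val_mul, hgu_val, hgu_val, Units.val_pow_eq_pow_val] at this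
      exact this
    · rintro ⟨x, hx, hxe⟩
      obtain ⟨l, rfl⟩ := hg x hx
      have : g ^ k = g ^ (j + l * d) := by
        rw [pow_add, pow_mul]; exact hxe
      rw [key k (j + l*d) this, pow_add, mul_comm l d, pow_mul, hζ.pow_eq_one, one_pow, mul_one]
  -- nonvanishing of χ1 at powers of g
  have hχgj : ∀ j : ℕ, χ1 (g ^ j) ≠ 0 := by
    intro j h0
    have h1 := hval (g ^ j) (pow_ne_zero j hg0)
    rw [h0, zero_pow hd0] at h1
    exact zero_ne_one h1
  -- orthogonality
  have horth : ∀ (j : ℕ) (y : F),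
      (∑ m ∈ Finset.range d, ((χ1 (g ^ j))⁻¹) ^ m * (χ1 ^ m) y)
        = if ∃ x : F, x ≠ 0 ∧ y = g ^ j * x ^ d then (d : ℂ) else 0 := by
    intro j y
    rcases eq_or_ne y 0 with rfl | hy
    · rw [if_neg, Finset.sum_eq_zero]
      · intro m _
        rw [MulChar.map_zero, mul_zero]
      · rintro ⟨x, hx, hxe⟩
        exact (mul_ne_zero (pow_ne_zero j hg0) (pow_ne_zero d hx)) hxe.symm
    · have hu : IsUnit y := isUnit_iff_ne_zero.mpr hy
      have hterm : ∀ m : ℕ, ((χ1 (g ^ j))⁻¹) ^ m * (χ1 ^ m) y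
          = ((χ1 (g ^ j))⁻¹ * χ1 y) ^ m := by
        intro m
        rw [mul_pow]
        congr 1
        rcases Nat.eq_zero_or_pos m with rfl | hm
        · rw [pow_zero, pow_zero, MulChar.one_apply hu]
        · rw [MulChar.pow_apply' χ1 hm.ne' y]
      rw [Finset.sum_congr rfl fun m _ => hterm m]
      by_cases hcond : ∃ x : F, x ≠ 0 ∧ y = g ^ j * x ^ d
      · have he : χ1 y = χ1 (g ^ j) := (hiff j y hy).mpr hcond
        rw [if_pos hcond, he, inv_mul_cancel₀ (hχgj j)]
        simp
      · rw [if_neg hcond]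
        have hr1 : (χ1 (g ^ j))⁻¹ * χ1 y ≠ 1 := by
          intro h1
          exact hcond ((hiff j y hy).mp ((inv_mul_eq_one₀ (hχgj j)).mp h1).symm)
        have hrd : ((χ1 (g ^ j))⁻¹ * χ1 y) ^ d = 1 := by
          rw [mul_pow, inv_pow, hval (g ^ j) (pow_ne_zero j hg0), hval y hy, inv_one, one_mul]
        rw [geom_sum_eq hr1 d, hrd, sub_self, zero_div]
  -- the double sum
  set c1 : ℂ := (χ1 (g ^ j₁))⁻¹ with hc1def
  set c2 : ℂ := (χ1 (g ^ j₂))⁻¹ with hc2def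
  set P : F → Prop := fun γ => (∃ x : F, x ≠ 0 ∧ β + γ = g ^ j₁ * x ^ d) ∧
      (∃ x : F, x ≠ 0 ∧ β - γ = g ^ j₂ * x ^ d) with hPdef
  set N : ℕ := (Finset.univ.filter P).card with hNdef
  set S : ℕ → ℕ → ℂ := (fun m m' => ∑ γ : F, (χ1 ^ m) (β + γ) * (χ1 ^ m') (β - γ)) with hSdef
  have hT1 : ∑ γ : F, (∑ m ∈ Finset.range d, c1 ^ m * (χ1 ^ m) (β + γ)) *
      (∑ m ∈ Finset.range d, c2 ^ m * (χ1 ^ m) (β - γ)) = (N : ℂ) * (d : ℂ) ^ 2 := by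
    have hterm : ∀ γ : F, (∑ m ∈ Finset.range d, c1 ^ m * (χ1 ^ m) (β + γ)) *
        (∑ m ∈ Finset.range d, c2 ^ m * (χ1 ^ m) (β - γ))
          = if P γ then ((d:ℂ))^2 else 0 := by
      intro γ
      rw [horth j₁ (β + γ), horth j₂ (β - γ)]
      by_cases h1 : ∃ x : F, x ≠ 0 ∧ β + γ = g ^ j₁ * x ^ d <;>
        by_cases h2 : ∃ x : F, x ≠ 0 ∧ β - γ = g ^ j₂ * x ^ d <;>
        simp [hPdef, h1, h2, sq]
    rw [Finset.sum_congr rfl fun γ _ => hterm γ, ← Finset.sum_filter, Finset.sum_const,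
      nsmul_eq_mul]
  have hT2 : ∑ γ : F, (∑ m ∈ Finset.range d, c1 ^ m * (χ1 ^ m) (β + γ)) *
      (∑ m ∈ Finset.range d, c2 ^ m * (χ1 ^ m) (β - γ))
        = ∑ p ∈ Finset.range d ×ˢ Finset.range d, (c1 ^ p.1 * c2 ^ p.2) * S p.1 p.2 := by
    rw [Finset.sum_product]
    have hexp : ∀ γ : F, (∑ m ∈ Finset.range d, c1 ^ m * (χ1 ^ m) (β + γ)) *
        (∑ m ∈ Finset.range d, c2 ^ m * (χ1 ^ m) (β - γ))
          = ∑ m ∈ Finset.range d, ∑ m' ∈ Finset.range d,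
              (c1 ^ m * (χ1 ^ m) (β + γ)) * (c2 ^ m' * (χ1 ^ m') (β - γ)) :=
      fun γ => Finset.sum_mul_sum _ _ _ _
    rw [Finset.sum_congr rfl fun γ _ => hexp γ, Finset.sum_comm]
    refine Finset.sum_congr rfl fun m _ => ?_
    rw [Finset.sum_comm]
    refine Finset.sum_congr rfl fun m' _ => ?_
    simp only [hSdef]
    rw [Finset.mul_sum]
    exact Finset.sum_congr rfl fun γ _ => by ring
  -- the (0,0) term
  have h00 : ((0,0) : ℕ × ℕ) ∈ Finset.range d ×ˢ Finset.range d := by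
    simp [Finset.mem_product, hd]
  have hS00 : (c1 ^ (0:ℕ) * c2 ^ (0:ℕ)) * S 0 0 = (q:ℂ) - 2 := by
    have h1 : S 0 0 = (q:ℂ) - 2 := by
      simp only [hSdef]
      rw [pow_zero, sum_shift h2β 1 1, jacobiSum_one_one,
        MulChar.one_apply (isUnit_iff_ne_zero.mpr h2β), hq]
      ring
    rw [pow_zero, pow_zero, one_mul, one_mul, h1]
  -- norms of the coefficients
  have hnc1 : ‖c1‖ = 1 := by
    rw [hc1def, norm_inv, norm_mulChar_eq_one hd0 χ1 hχ1d (pow_ne_zero j₁ hg0), inv_one]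
  have hnc2 : ‖c2‖ = 1 := by
    rw [hc2def, norm_inv, norm_mulChar_eq_one hd0 χ1 hχ1d (pow_ne_zero j₂ hg0), inv_one]
  -- the bound
  have hbound : ‖(N : ℂ) * (d:ℂ)^2 - ((q:ℂ) - 2)‖ ≤ ((d:ℝ)^2 - 1) * Real.sqrt q := by
    rw [← hT1, hT2, ← Finset.sum_erase_add _ _ h00]
    simp only [hS00]
    rw [add_sub_cancel_right]
    calc ‖∑ p ∈ (Finset.range d ×ˢ Finset.range d).erase (0,0),
            (c1 ^ p.1 * c2 ^ p.2) * S p.1 p.2‖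
        ≤ ∑ p ∈ (Finset.range d ×ˢ Finset.range d).erase (0,0),
            ‖(c1 ^ p.1 * c2 ^ p.2) * S p.1 p.2‖ := norm_sum_le _ _
      _ ≤ ∑ _p ∈ (Finset.range d ×ˢ Finset.range d).erase (0,0), Real.sqrt q := by
          refine Finset.sum_le_sum fun p hp => ?_
          rw [Finset.mem_erase] at hp
          obtain ⟨hpne, hpmem⟩ := hp
          rw [Finset.mem_product, Finset.mem_range, Finset.mem_range] at hpmem
          have hnontriv : ¬(χ1 ^ p.1 = 1 ∧ χ1 ^ p.2 = 1) := by
            rintro ⟨hA, hB⟩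
            rcases Nat.eq_zero_or_pos p.1 with hz1 | hpos1
            · rcases Nat.eq_zero_or_pos p.2 with hz2 | hpos2
              · exact hpne (Prod.ext hz1 hz2)
              · exact hnt p.2 hpos2 hpmem.2 hB
            · exact hnt p.1 hpos1 hpmem.1 hA
          rw [norm_mul, norm_mul, norm_pow, norm_pow, hnc1, hnc2, one_pow, one_pow,
            one_mul, one_mul]
          simp only [hSdef]
          exact norm_S_le hq hd0 h2β (χ1 ^ p.1) (χ1 ^ p.2) (hχ1md p.1) (hχ1md p.2) hnontriv
      _ ≤ ((d:ℝ)^2 - 1) * Real.sqrt q := by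
          rw [Finset.sum_const, nsmul_eq_mul]
          have hcard : ((Finset.range d ×ˢ Finset.range d).erase (0,0)).card = d * d - 1 := by
            rw [Finset.card_erase_of_mem h00, Finset.card_product, Finset.card_range]
          rw [hcard]
          have h1dd : 1 ≤ d * d := Nat.one_le_iff_ne_zero.mpr (by positivity)
          have : ((d * d - 1 : ℕ) : ℝ) = (d:ℝ)^2 - 1 := by
            push_cast [Nat.cast_sub h1dd]
            ring
          rw [this]
  -- conclude the counting estimate
  have habs : |(N:ℝ) * (d:ℝ)^2 - ((q:ℝ) - 2)| ≤ ((d:ℝ)^2 - 1) * Real.sqrt q := by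
    have hcast : (N : ℂ) * (d:ℂ)^2 - ((q:ℂ) - 2)
        = (((N:ℝ) * (d:ℝ)^2 - ((q:ℝ) - 2) : ℝ) : ℂ) := by push_cast; ring
    rw [hcast, Complex.norm_real, Real.norm_eq_abs] at hbound
    exact hbound
  have hlow : (q:ℝ) - 2 - ((d:ℝ)^2 - 1) * Real.sqrt q ≤ (N:ℝ) * (d:ℝ)^2 := by
    have h1 := (abs_le.mp habs).1
    linarith
  have hnum := numeric_ineq hd hsmall
  have hN2 : 1 < N := by
    by_contra hN
    push_neg at hN
    have hNr : (N:ℝ) ≤ 1 := by exact_mod_cast hN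
    have hdd : (0:ℝ) ≤ (d:ℝ)^2 := sq_nonneg _
    nlinarith
  -- extract a good γ
  obtain ⟨γ, hγmem, hγ0⟩ := Finset.exists_mem_ne (hNdef ▸ hN2) (0 : F)
  rw [Finset.mem_filter] at hγmem
  have hP : P γ := hγmem.2
  rw [hPdef] at hP
  obtain ⟨h1, h2⟩ := hP
  refine ⟨γ, hγ0, ?_, ?_, h1, h2⟩
  · rintro rfl
    obtain ⟨x, hx, hxe⟩ := h2
    rw [sub_self] at hxe
    exact (mul_ne_zero (pow_ne_zero j₂ hg0) (pow_ne_zero d hx)) hxe.symm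
  · rintro rfl
    obtain ⟨x, hx, hxe⟩ := h1
    rw [add_neg_cancel] at hxe
    exact (mul_ne_zero (pow_ne_zero j₁ hg0) (pow_ne_zero d hx)) hxe.symm
end

section
/- Let α ∈ F_3 and β ∈ F∖{0}. Then the number of ordered pairs (d, d') ∈ D_{α,β} × D_{α,β} with d + d' = 0 equals #{x ∈ F∖{0} : Tr(x^{(q−1)/(2ℓ^m)}) = α and Tr(β·x) = 0}, and this common value equals (q − 3 + w(α,β) + w(α,2β) + w(α,0))/9. -/
open scoped Classical

noncomputable section

def zeta3 : ℂ := Complex.exp (2 * Real.pi * Complex.I / 3)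

def chi (F : Type*) [Field F] [Fintype F] [Algebra (ZMod 3) F] (c : F) : ℂ :=
  zeta3 ^ (Algebra.trace (ZMod 3) F c).val

def Ssum (F : Type*) [Field F] [Fintype F] [Algebra (ZMod 3) F] (N : ℕ) (a b : F) : ℂ :=
  ∑ x : Fˣ, chi F (a * (x : F) ^ ((Fintype.card F - 1) / N) + b * (x : F))

def wab (F : Type*) [Field F] [Fintype F] [Algebra (ZMod 3) F] (N : ℕ) (α : ZMod 3) (β : F) : ℂ :=
  zeta3 ^ (-α).val * Ssum F N 1 β + zeta3 ^ α.val * Ssum F N 2 (2 * β)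

def Dset (F : Type*) [Field F] [Fintype F] [Algebra (ZMod 3) F] (N : ℕ) (α : ZMod 3) (β : F) : Set F :=
  {x | x ≠ 0 ∧ Algebra.trace (ZMod 3) F (x ^ ((Fintype.card F - 1) / N) + β * x) = α}

def wtd (F : Type*) [Field F] [Fintype F] [Algebra (ZMod 3) F] (N : ℕ) (α : ZMod 3) (β γ : F) : ℕ :=
  Set.ncard {d ∈ Dset F N α β | Algebra.trace (ZMod 3) F (γ * d) ≠ 0}

def codeMap (F : Type*) [Field F] [Fintype F] [Algebra (ZMod 3) F] (N : ℕ) (α : ZMod 3) (β : F) :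
    F → (↥(Dset F N α β) → ZMod 3) :=
  fun x d => Algebra.trace (ZMod 3) F ((d : F) * x)

def sqrtq (F : Type*) [Fintype F] : ℝ := Real.sqrt (Fintype.card F)

def Ind {F : Type*} [Monoid F] (g x : F) : ℕ := sInf {k : ℕ | x = g ^ k}

def jmod {F : Type*} [Monoid F] (N : ℕ) (g x : F) : ℕ := ((-(Ind g x : ℤ)) % (N : ℤ)).toNat

def J1p1 (ℓ m j : ℕ) : Prop := 1 ≤ j ∧ j ≤ (ℓ - 1) * ℓ ^ (m - 1) ∧ ¬ ℓ ^ (m - 1) ∣ j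
def J1p2 (ℓ m j : ℕ) : Prop := 1 ≤ j ∧ j ≤ (ℓ - 1) * ℓ ^ (m - 1) ∧ ℓ ^ (m - 1) ∣ j ∧ ¬ 2 ∣ j
def J1p3 (ℓ m j : ℕ) : Prop := 1 ≤ j ∧ j ≤ (ℓ - 1) * ℓ ^ (m - 1) ∧ 2 * ℓ ^ (m - 1) ∣ j
def J2mem (ℓ m j : ℕ) : Prop := (ℓ - 1) * ℓ ^ (m - 1) < j ∧ j ≤ ℓ ^ m
def J3p1 (ℓ m j : ℕ) : Prop := (ℓ ^ m < j ∧ j ≤ 2 * ℓ ^ m - ℓ ^ (m - 1)) ∧ ¬ ℓ ^ (m - 1) ∣ j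
def J3p2 (ℓ m j : ℕ) : Prop := ∃ k, 1 ≤ k ∧ k ≤ ℓ - 1 ∧ k % 2 = 0 ∧ j = ℓ ^ m + k * ℓ ^ (m - 1)
def J3p3 (ℓ m j : ℕ) : Prop := ∃ k, 1 ≤ k ∧ k ≤ ℓ - 1 ∧ k % 2 = 1 ∧ j = ℓ ^ m + k * ℓ ^ (m - 1)
def J4mem (ℓ m j : ℕ) : Prop := 2 * ℓ ^ m - ℓ ^ (m - 1) < j ∧ j ≤ 2 * ℓ ^ m - 1
def Jp (ℓ m j : ℕ) : Prop := j = 0 ∨ J1p1 ℓ m j ∨ J2mem ℓ m j ∨ J3p1 ℓ m j ∨ J4mem ℓ m j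
def Jpp (ℓ m j : ℕ) : Prop := J1p1 ℓ m j ∨ (J2mem ℓ m j ∧ j ≠ ℓ ^ m) ∨ J3p1 ℓ m j ∨ J4mem ℓ m j


/- ### Auxiliary lemmas -/

lemma zeta3_pow_three : zeta3 ^ 3 = 1 := by
  rw [zeta3, ← Complex.exp_nat_mul]
  push_cast
  rw [show (3:ℂ) * (2 * Real.pi * Complex.I / 3) = 2 * Real.pi * Complex.I by ring]
  exact Complex.exp_two_pi_mul_I

lemma zeta3_ne_one : zeta3 ≠ 1 := by
  intro h
  rw [zeta3, Complex.exp_eq_one_iff] at h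
  obtain ⟨k, hk⟩ := h
  have hpi : (Real.pi : ℂ) ≠ 0 := by exact_mod_cast Real.pi_ne_zero
  have hne : (2 * (Real.pi:ℂ) * Complex.I) ≠ 0 := by
    simp [hpi, Complex.I_ne_zero]
  have h1 : ((3 * k - 1 : ℤ) : ℂ) * (2 * Real.pi * Complex.I) = 0 := by
    push_cast
    linear_combination (-3:ℂ) * hk
  rcases mul_eq_zero.mp h1 with h2 | h2
  · have : (3 * k - 1 : ℤ) = 0 := by exact_mod_cast h2
    omega
  · exact hne h2

lemma zeta3_sum : 1 + zeta3 + zeta3 ^ 2 = 0 := by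
  have h : (zeta3 - 1) * (1 + zeta3 + zeta3 ^ 2) = 0 := by
    linear_combination zeta3_pow_three
  rcases mul_eq_zero.mp h with h2 | h2
  · exact absurd (sub_eq_zero.mp h2) zeta3_ne_one
  · exact h2

lemma zeta3_pow_mod (a : ℕ) : zeta3 ^ a = zeta3 ^ (a % 3) := by
  conv_lhs => rw [← Nat.div_add_mod a 3]
  rw [pow_add, pow_mul, zeta3_pow_three, one_pow, one_mul]

def psi (t : ZMod 3) : ℂ := zeta3 ^ t.val

lemma psi_zero : psi 0 = 1 := by simp [psi]

lemma psi_one : psi 1 = zeta3 := by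
  rw [psi, show ((1:ZMod 3)).val = 1 from rfl, pow_one]

lemma psi_add (s t : ZMod 3) : psi (s + t) = psi s * psi t := by
  rw [psi, psi, psi, ZMod.val_add, ← zeta3_pow_mod, pow_add]

lemma sum_zmod3 (f : ZMod 3 → ℂ) : ∑ u : ZMod 3, f u = f 0 + f 1 + f 2 := by
  rw [show (Finset.univ : Finset (ZMod 3)) = {0, 1, 2} by decide]
  rw [Finset.sum_insert (by decide), Finset.sum_insert (by decide), Finset.sum_singleton]
  ring

lemma psi_sum (t : ZMod 3) : ∑ u : ZMod 3, psi (u * t) = if t = 0 then 3 else 0 := by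
  rcases (by decide : ∀ t : ZMod 3, t = 0 ∨ t = 1 ∨ t = 2) t with h | h | h <;> subst h <;>
    rw [sum_zmod3]
  · simp [psi_zero]; norm_num
  · rw [if_neg (by decide)]
    rw [show ((0:ZMod 3)) * 1 = 0 by decide, show ((1:ZMod 3)) * 1 = 1 by decide,
      show ((2:ZMod 3)) * 1 = 2 by decide]
    have h2 : psi 2 = zeta3 ^ 2 := by rw [psi, show ((2:ZMod 3)).val = 2 from rfl]
    rw [psi_zero, psi_one, h2]; linear_combination zeta3_sum
  · rw [if_neg (by decide)]
    rw [show ((0:ZMod 3)) * 2 = 0 by decide, show ((1:ZMod 3)) * 2 = 2 by decide,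
      show ((2:ZMod 3)) * 2 = 1 by decide]
    have h2 : psi 2 = zeta3 ^ 2 := by rw [psi, show ((2:ZMod 3)).val = 2 from rfl]
    rw [psi_zero, psi_one, h2]; linear_combination zeta3_sum

section FieldLemmas
variable {F : Type*} [Field F] [Fintype F] [Algebra (ZMod 3) F]

omit [Algebra (ZMod 3) F] in
lemma sum_units_add (f : F → ℂ) : ∑ x : F, f x = f 0 + ∑ x : Fˣ, f ↑x := by
  have e1 : ∑ x : Fˣ, f ↑x = ∑ x : {a : F // a ≠ 0}, f ↑x :=
    Fintype.sum_equiv unitsEquivNeZero _ _ (fun x => rfl)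
  have e2 : ∑ x : {a : F // a ≠ 0}, f ↑x = ∑ x ∈ Finset.univ.filter (· ≠ (0:F)), f x := by
    rw [Finset.sum_subtype (p := fun a : F => a ≠ 0) (Finset.univ.filter (· ≠ (0:F))) (by simp) f]
  rw [e1, e2, ← Finset.sum_filter_add_sum_filter_not Finset.univ (· = (0:F)) f]
  congr 1
  rw [show Finset.univ.filter (· = (0:F)) = {0} by ext x; simp]
  simp

lemma sum_psi_trace : ∑ x : F, psi (Algebra.trace (ZMod 3) F x) = 0 := by
  have hfin : Module.Finite (ZMod 3) F := Module.Finite.of_finite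
  obtain ⟨y0, hy0⟩ := Algebra.trace_surjective (ZMod 3) F 1
  have hshift : ∑ x : F, psi (Algebra.trace (ZMod 3) F (x + y0)) =
      ∑ x : F, psi (Algebra.trace (ZMod 3) F x) :=
    Fintype.sum_equiv (Equiv.addRight y0) _ _ (fun x => rfl)
  have hmul : ∑ x : F, psi (Algebra.trace (ZMod 3) F (x + y0)) =
      (∑ x : F, psi (Algebra.trace (ZMod 3) F x)) * zeta3 := by
    rw [Finset.sum_mul]
    refine Finset.sum_congr rfl fun x _ => ?_
    rw [map_add, hy0, psi_add, psi_one]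
  have h := hmul.symm.trans hshift
  have h2 : (∑ x : F, psi (Algebra.trace (ZMod 3) F x)) * (zeta3 - 1) = 0 := by
    linear_combination h
  rcases mul_eq_zero.mp h2 with h3 | h3
  · exact h3
  · exact absurd (sub_eq_zero.mp h3) zeta3_ne_one

lemma sum_units_psi {c : F} (hc : c ≠ 0) :
    ∑ x : Fˣ, psi (Algebra.trace (ZMod 3) F (c * x)) = -1 := by
  have h0 : ∑ x : F, psi (Algebra.trace (ZMod 3) F (c * x)) =
      ∑ x : F, psi (Algebra.trace (ZMod 3) F x) :=
    Fintype.sum_equiv (Equiv.mulLeft₀ c hc) _ _ (fun x => rfl)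
  have h1 := sum_units_add (F := F) (fun x => psi (Algebra.trace (ZMod 3) F (c * x)))
  rw [h0, sum_psi_trace] at h1
  simp only [mul_zero, map_zero, psi_zero] at h1
  linear_combination -h1

lemma psi_trace_eq_chi (c : F) : psi (Algebra.trace (ZMod 3) F c) = chi F c := rfl

lemma Ssum_zero_zero (N : ℕ) : Ssum F N 0 0 = (Fintype.card F : ℂ) - 1 := by
  have h : ∀ x : Fˣ, chi F ((0:F) * (x:F) ^ ((Fintype.card F - 1) / N) + 0 * (x:F)) = 1 := by
    intro x
    rw [zero_mul, zero_mul, add_zero, chi, map_zero, ZMod.val_zero, pow_zero]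
  rw [Ssum, Finset.sum_congr rfl (fun x _ => h x), Finset.sum_const, Finset.card_univ,
    Fintype.card_units, nsmul_eq_mul, mul_one, Nat.cast_sub Fintype.card_pos, Nat.cast_one]

lemma Ssum_zero_ne (N : ℕ) {b : F} (hb : b ≠ 0) : Ssum F N 0 b = -1 := by
  have h : ∀ x : Fˣ, chi F ((0:F) * (x:F) ^ ((Fintype.card F - 1) / N) + b * (x:F)) =
      psi (Algebra.trace (ZMod 3) F (b * x)) := by
    intro x
    rw [zero_mul, zero_add, psi_trace_eq_chi]
  rw [Ssum, Finset.sum_congr rfl (fun x _ => h x)]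
  exact sum_units_psi hb

end FieldLemmas

/-- The number of ordered pairs `(d,d') ∈ D² with d + d' = 0` equals the
number of `x ≠ 0` with `Tr(x^{(q−1)/(2ℓ^m)}) = α` and `Tr(βx) = 0`, and this common value
is `(q − 3 + w(α,β) + w(α,2β) + w(α,0))/9`. -/
theorem statement_8 (ℓ m : ℕ) (hℓ : ℓ.Prime) (hℓ3 : 3 < ℓ) (hm : 0 < m)
    (hprim : orderOf ((3 : ZMod (2 * ℓ ^ m))) = (2 * ℓ ^ m).totient)
    (F : Type*) [Field F] [Fintype F] [Algebra (ZMod 3) F]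
    (hq : Fintype.card F = 3 ^ (2 * ℓ ^ m).totient)
    (α : ZMod 3) (β : F) (hβ : β ≠ 0) :
    Set.ncard {dd : F × F |
        dd.1 ∈ Dset F (2 * ℓ ^ m) α β ∧ dd.2 ∈ Dset F (2 * ℓ ^ m) α β ∧ dd.1 + dd.2 = 0} =
      Set.ncard {x : F | x ≠ 0 ∧
        Algebra.trace (ZMod 3) F (x ^ ((Fintype.card F - 1) / (2 * ℓ ^ m))) = α ∧
        Algebra.trace (ZMod 3) F (β * x) = 0} ∧
    ((Set.ncard {dd : F × F |
        dd.1 ∈ Dset F (2 * ℓ ^ m) α β ∧ dd.2 ∈ Dset F (2 * ℓ ^ m) α β ∧ dd.1 + dd.2 = 0} : ℂ)) =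
      ((Fintype.card F : ℂ) - 3 + wab F (2 * ℓ ^ m) α β + wab F (2 * ℓ ^ m) α (2 * β) +
        wab F (2 * ℓ ^ m) α 0) / 9 := by
  have hl2 : 2 ≤ ℓ ^ m := le_trans (by omega) (Nat.le_self_pow hm.ne' ℓ)
  have hMpos : 0 < 2 * ℓ ^ m := by omega
  haveI : NeZero (2 * ℓ ^ m) := ⟨by omega⟩
  -- `n` is even
  have he_even : Even ((2 * ℓ ^ m).totient) := Nat.totient_even (by omega)
  have h3pow : ((3:ℕ) : ZMod (2 * ℓ ^ m)) ^ (2 * ℓ ^ m).totient = 1 := by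
    have h := pow_orderOf_eq_one ((3 : ZMod (2 * ℓ ^ m)))
    rw [hprim] at h
    exact_mod_cast h
  have h1le : (1:ℕ) ≤ 3 ^ (2 * ℓ ^ m).totient := Nat.one_le_pow _ _ (by norm_num)
  have hMdvd : (2 * ℓ ^ m) ∣ 3 ^ (2 * ℓ ^ m).totient - 1 := by
    have h1 : ((3 ^ (2 * ℓ ^ m).totient - 1 : ℕ) : ZMod (2 * ℓ ^ m)) = 0 := by
      push_cast [h1le]
      rw [sub_eq_zero]
      exact_mod_cast h3pow
    exact (ZMod.natCast_eq_zero_iff _ _).mp h1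
  obtain ⟨k, hk⟩ := he_even
  have h4dvd : (4:ℕ) ∣ 3 ^ (2 * ℓ ^ m).totient - 1 := by
    have h8 : (8:ℕ) ∣ 9 ^ k - 1 := by
      have := Nat.sub_dvd_pow_sub_pow 9 1 k
      simpa using this
    have h9 : (3:ℕ) ^ (2 * ℓ ^ m).totient = 9 ^ k := by
      rw [hk, pow_add, ← mul_pow]; norm_num
    rw [h9]
    exact dvd_trans (by norm_num) h8
  have hcop : Nat.Coprime 4 (ℓ ^ m) := by
    have h2l : Nat.Coprime 2 ℓ := (Nat.coprime_primes Nat.prime_two hℓ).mpr (by omega)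
    have := Nat.Coprime.pow (k := 2) (l := ℓ) (m := 2) (n := m) h2l
    simpa using this
  have h4l : 4 * ℓ ^ m ∣ 3 ^ (2 * ℓ ^ m).totient - 1 :=
    hcop.mul_dvd_of_dvd_of_dvd h4dvd (dvd_trans (dvd_mul_left _ 2) hMdvd)
  obtain ⟨t, ht⟩ := h4l
  have hneven : Even ((Fintype.card F - 1) / (2 * ℓ ^ m)) := by
    refine ⟨t, ?_⟩
    rw [hq]
    rw [show (3:ℕ) ^ (2 * ℓ ^ m).totient - 1 = (2 * ℓ ^ m) * (t + t) by rw [ht]; ring]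
    rw [Nat.mul_div_cancel_left _ hMpos]
  -- the bijection (d, d') ↦ d
  have hinj : Function.Injective (fun x : F => (x, -x)) := fun a b h => congrArg Prod.fst h
  have key3 : ∀ a b c : ZMod 3, a + b = c → a - b = c → a = c ∧ b = 0 := by decide
  have hset : {dd : F × F |
        dd.1 ∈ Dset F (2 * ℓ ^ m) α β ∧ dd.2 ∈ Dset F (2 * ℓ ^ m) α β ∧ dd.1 + dd.2 = 0}
      = (fun x : F => (x, -x)) '' {x : F | x ≠ 0 ∧
        Algebra.trace (ZMod 3) F (x ^ ((Fintype.card F - 1) / (2 * ℓ ^ m))) = α ∧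
        Algebra.trace (ZMod 3) F (β * x) = 0} := by
    ext dd
    simp only [Set.mem_setOf_eq, Set.mem_image, Dset]
    constructor
    · rintro ⟨⟨hd0, hd⟩, ⟨hd'0, hd'⟩, hsum⟩
      have hdd2 : dd.2 = -dd.1 := by linear_combination hsum
      rw [hdd2, hneven.neg_pow, mul_neg, ← sub_eq_add_neg, map_sub] at hd'
      rw [map_add] at hd
      obtain ⟨ha, hb⟩ := key3 _ _ _ hd hd'
      exact ⟨dd.1, ⟨hd0, ha, hb⟩, Prod.ext rfl hdd2.symm⟩
    · rintro ⟨x, ⟨hx0, hxa, hxb⟩, rfl⟩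
      refine ⟨⟨hx0, ?_⟩, ⟨neg_ne_zero.mpr hx0, ?_⟩, add_neg_cancel x⟩
      · rw [map_add, hxa, hxb, add_zero]
      · rw [hneven.neg_pow, mul_neg, ← sub_eq_add_neg, map_sub, hxa, hxb, sub_zero]
  have hSunits : {x : F | x ≠ 0 ∧
        Algebra.trace (ZMod 3) F (x ^ ((Fintype.card F - 1) / (2 * ℓ ^ m))) = α ∧
        Algebra.trace (ZMod 3) F (β * x) = 0}
      = (fun x : Fˣ => (x:F)) '' {x : Fˣ |
        Algebra.trace (ZMod 3) F ((x:F) ^ ((Fintype.card F - 1) / (2 * ℓ ^ m))) = α ∧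
        Algebra.trace (ZMod 3) F (β * x) = 0} := by
    ext x
    simp only [Set.mem_setOf_eq, Set.mem_image]
    constructor
    · rintro ⟨hx0, h1, h2⟩
      exact ⟨Units.mk0 x hx0, ⟨h1, h2⟩, rfl⟩
    · rintro ⟨u, ⟨h1, h2⟩, rfl⟩
      exact ⟨u.ne_zero, h1, h2⟩
  refine ⟨by rw [hset, Set.ncard_image_of_injective _ hinj], ?_⟩
  rw [hset, Set.ncard_image_of_injective _ hinj, hSunits,
    Set.ncard_image_of_injective _ Units.val_injective, Set.ncard_eq_toFinset_card', Set.toFinset_setOf]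
  -- character sum computation
  have hTlin : ∀ (c : ZMod 3) (y : F), c * Algebra.trace (ZMod 3) F y
      = Algebra.trace (ZMod 3) F (algebraMap (ZMod 3) F c * y) := by
    intro c y
    rw [← Algebra.smul_def, map_smul, smul_eq_mul]
  have h2F : (2:F) ≠ 0 := by
    have h2 : (2:F) = algebraMap (ZMod 3) F 2 := (map_ofNat _ 2).symm
    rw [h2]
    simp only [ne_eq, map_eq_zero]
    decide
  have h2β : (2:F) * β ≠ 0 := mul_ne_zero h2F hβ
  have h4β : (2:F) * (2 * β) = β := by
    have h3 : (3:F) = 0 := by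
      have hmap := map_natCast (algebraMap (ZMod 3) F) 3
      rw [show (((3:ℕ)):ZMod 3) = 0 by decide, map_zero] at hmap
      exact_mod_cast hmap.symm
    linear_combination h3 * β
  have hbig : ∀ x : Fˣ, ∑ u : ZMod 3, ∑ v : ZMod 3,
      psi (u * (Algebra.trace (ZMod 3) F ((x:F) ^ ((Fintype.card F - 1) / (2 * ℓ ^ m))) - α)) *
        psi (v * Algebra.trace (ZMod 3) F (β * x))
      = if Algebra.trace (ZMod 3) F ((x:F) ^ ((Fintype.card F - 1) / (2 * ℓ ^ m))) = α ∧
          Algebra.trace (ZMod 3) F (β * x) = 0 then 9 else 0 := by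
    intro x
    rw [← Finset.sum_mul_sum, psi_sum, psi_sum]
    by_cases h1 : Algebra.trace (ZMod 3) F ((x:F) ^ ((Fintype.card F - 1) / (2 * ℓ ^ m))) = α <;>
      by_cases h2 : Algebra.trace (ZMod 3) F (β * x) = 0 <;>
      simp [h1, h2, sub_eq_zero] <;> norm_num
  have hinner : ∀ u v : ZMod 3, ∑ x : Fˣ,
      psi (u * (Algebra.trace (ZMod 3) F ((x:F) ^ ((Fintype.card F - 1) / (2 * ℓ ^ m))) - α)) *
        psi (v * Algebra.trace (ZMod 3) F (β * x))
      = psi (-(u * α)) * Ssum F (2 * ℓ ^ m) (algebraMap (ZMod 3) F u)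
          (algebraMap (ZMod 3) F v * β) := by
    intro u v
    rw [Ssum, Finset.mul_sum]
    refine Finset.sum_congr rfl fun x _ => ?_
    rw [show u * (Algebra.trace (ZMod 3) F ((x:F) ^ ((Fintype.card F - 1) / (2 * ℓ ^ m))) - α)
        = -(u * α) + u * Algebra.trace (ZMod 3) F ((x:F) ^ ((Fintype.card F - 1) / (2 * ℓ ^ m)))
        by ring]
    rw [psi_add, mul_assoc, ← psi_add, hTlin, hTlin, ← map_add]
    rw [show algebraMap (ZMod 3) F v * (β * (x:F)) = algebraMap (ZMod 3) F v * β * (x:F) from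
      (mul_assoc _ _ _).symm]
    rw [psi_trace_eq_chi]
  have hswap : ∑ x : Fˣ, ∑ u : ZMod 3, ∑ v : ZMod 3,
      psi (u * (Algebra.trace (ZMod 3) F ((x:F) ^ ((Fintype.card F - 1) / (2 * ℓ ^ m))) - α)) *
        psi (v * Algebra.trace (ZMod 3) F (β * x))
      = (Fintype.card F : ℂ) - 3 + wab F (2 * ℓ ^ m) α β + wab F (2 * ℓ ^ m) α (2 * β) +
        wab F (2 * ℓ ^ m) α 0 := by
    rw [Finset.sum_comm]
    rw [Finset.sum_congr rfl fun u _ => Finset.sum_comm]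
    rw [Finset.sum_congr rfl fun u (_ : u ∈ Finset.univ) =>
      Finset.sum_congr rfl fun v (_ : v ∈ Finset.univ) => hinner u v]
    rw [sum_zmod3, sum_zmod3, sum_zmod3, sum_zmod3]
    simp only [map_zero, map_one, map_ofNat, zero_mul, one_mul, mul_zero, neg_zero, psi_zero]
    rw [Ssum_zero_zero, Ssum_zero_ne _ hβ, Ssum_zero_ne _ h2β]
    rw [wab, wab, wab, h4β]
    rw [show (-((2:ZMod 3) * α)) = α from (by decide : ∀ a : ZMod 3, -(2 * a) = a) α]
    rw [show (2:F) * 0 = 0 from mul_zero 2]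
    simp only [psi]
    ring
  have hcount : ∑ x : Fˣ, ∑ u : ZMod 3, ∑ v : ZMod 3,
      psi (u * (Algebra.trace (ZMod 3) F ((x:F) ^ ((Fintype.card F - 1) / (2 * ℓ ^ m))) - α)) *
        psi (v * Algebra.trace (ZMod 3) F (β * x))
      = 9 * ((Finset.univ.filter (fun x : Fˣ =>
          Algebra.trace (ZMod 3) F ((x:F) ^ ((Fintype.card F - 1) / (2 * ℓ ^ m))) = α ∧
          Algebra.trace (ZMod 3) F (β * x) = 0)).card : ℂ) := by
    rw [Finset.sum_congr rfl fun x (_ : x ∈ Finset.univ) => hbig x]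
    rw [Finset.sum_ite, Finset.sum_const, Finset.sum_const_zero, add_zero, nsmul_eq_mul]
    ring
  rw [eq_div_iff (by norm_num : (9:ℂ) ≠ 0)]
  linear_combination hswap - hcount
end
end

section
/- For x ∈ F∖{0}, write Tr₁ = Tr(x^{(q−1)/ℓ^m}) ∈ F_3 and Tr₂ = Tr(x^{(q−1)/(2ℓ^m)}) ∈ F_3. If ℓ ≡ 1 (mod 3), then Tr₁ = 0 for x ∈ F₁ ∪ F₂ ∪ F₃ ∪ F₆ and Tr₁ = −1 for x ∈ F₄ ∪ F₅; and Tr₂ = 0 for x ∈ F₁ ∪ F₃ ∪ F₆, Tr₂ = 1 for x ∈ F₂ ∪ F₅, and Tr₂ = −1 for x ∈ F₄. If ℓ ≡ 2 (mod 3), then Tr₁ = (−1)^{m−1} for x ∈ F₁ ∪ F₂ ∪ F₃, Tr₁ = (−1)^m for x ∈ F₄ ∪ F₅, and Tr₁ = 0 for x ∈ F₆; and Tr₂ = (−1)^{m−1} for x ∈ F₁ ∪ F₅, Tr₂ = (−1)^m for x ∈ F₃ ∪ F₄, and Tr₂ = 0 for x ∈ F₂ ∪ F₆ (all values (−1)^k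 taken in F_3). -/
open scoped Classical

noncomputable section

def memF1 {F : Type*} [Monoid F] (k2 k1 k2' k1' : ℕ) (x : F) : Prop := x ^ k2 = 1
def memF2 {F : Type*} [Monoid F] (k2 k1 k2' k1' : ℕ) (x : F) : Prop :=
  x ^ k2 ≠ 1 ∧ x ^ k1 = 1 ∧ x ^ k2' = 1
def memF3 {F : Type*} [Monoid F] (k2 k1 k2' k1' : ℕ) (x : F) : Prop :=
  x ^ k2 ≠ 1 ∧ x ^ k1 = 1 ∧ x ^ k2' ≠ 1
def memF4 {F : Type*} [Monoid F] (k2 k1 k2' k1' : ℕ) (x : F) : Prop :=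
  x ^ k2 ≠ 1 ∧ x ^ k1 ≠ 1 ∧ x ^ k2' = 1 ∧ x ^ k1' = 1
def memF5 {F : Type*} [Monoid F] (k2 k1 k2' k1' : ℕ) (x : F) : Prop :=
  x ^ k2 ≠ 1 ∧ x ^ k1 ≠ 1 ∧ x ^ k2' ≠ 1 ∧ x ^ k1' = 1
def memF6 {F : Type*} [Monoid F] (k2 k1 k2' k1' : ℕ) (x : F) : Prop :=
  x ^ k2 ≠ 1 ∧ x ^ k1 ≠ 1 ∧ x ^ k2' ≠ 1 ∧ x ^ k1' ≠ 1


section MyAuxST18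
open Finset

lemma neg_one_sub_one_zmod3 : (-1 : ZMod 3) - 1 = 1 := by decide
lemma two_nat_zmod3 : ((2 : ℕ) : ZMod 3) = -1 := by decide

lemma my_sum_decomp {M : Type*} [AddCommMonoid M] (f : ℕ → M) (t c : ℕ) :
    ∑ i ∈ range (t * c), f i = ∑ a ∈ range c, ∑ j ∈ range t, f (t * a + j) := by
  induction c with
  | zero => simp
  | succ n ih => rw [Nat.mul_succ, Finset.sum_range_add, ih, Finset.sum_range_succ]

lemma my_pow_mod {G : Type*} [Monoid G] (z : G) (d : ℕ) (hzd : z ^ d = 1) (n : ℕ) :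
    z ^ n = z ^ (n % d) := by
  conv_lhs => rw [← Nat.div_add_mod n d]
  rw [pow_add, pow_mul, hzd, one_pow, one_mul]

lemma my_pow_congr {G : Type*} [Monoid G] (z : G) (d : ℕ) (hzd : z ^ d = 1) {a b : ℕ}
    (h : a ≡ b [MOD d]) : z ^ a = z ^ b := by
  rw [my_pow_mod z d hzd a, my_pow_mod z d hzd b, show a % d = b % d from h]

lemma my_geom_zero {F : Type*} [Field F] (z : F) (n : ℕ) (h1 : z ≠ 1) (hn : z ^ n = 1) :
    ∑ i ∈ range n, z ^ i = 0 := by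
  have h := geom_sum_mul z n
  rw [hn, sub_self] at h
  rcases mul_eq_zero.mp h with h' | h'
  · exact h'
  · exact absurd (sub_eq_zero.mp h') h1

lemma my_mult_sum {F : Type*} [Field F] (z : F) (a b : ℕ) (ha : 0 < a) :
    ∑ k ∈ (range (a * b)).filter (fun k => a ∣ k), z ^ k = ∑ j ∈ range b, (z ^ a) ^ j := by
  have himg : (range (a*b)).filter (fun k => a ∣ k) = (range b).image (fun j => a * j) := by
    ext k
    simp only [mem_filter, mem_range, mem_image]
    constructor
    · rintro ⟨hk, j, rfl⟩
      exact ⟨j, lt_of_mul_lt_mul_left hk (Nat.zero_le a), rfl⟩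
    · rintro ⟨j, hj, rfl⟩
      exact ⟨Nat.mul_lt_mul_left ha |>.mpr hj, ⟨j, rfl⟩⟩
  rw [himg, Finset.sum_image (fun i _ j _ h => Nat.eq_of_mul_eq_mul_left ha h)]
  exact Finset.sum_congr rfl fun j _ => pow_mul z a j

lemma my_SC_prime {F : Type*} [Field F] (z : F) (p : ℕ) (hp : p.Prime)
    (hz : orderOf z = p) :
    ∑ k ∈ (range p).filter (fun k => Nat.Coprime k p), z ^ k = -1 := by
  have hz1 : z ≠ 1 := by
    intro h; rw [h, orderOf_one] at hz; exact hp.one_lt.ne hz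
  have hzp : z ^ p = 1 := hz ▸ pow_orderOf_eq_one z
  have hfil : (range p).filter (fun k => Nat.Coprime k p) = (range p).erase 0 := by
    ext k
    simp only [mem_filter, mem_range, mem_erase]
    constructor
    · rintro ⟨hk, hc⟩
      refine ⟨?_, hk⟩
      rintro rfl
      have : Nat.gcd 0 p = 1 := hc
      rw [Nat.gcd_zero_left] at this
      exact hp.one_lt.ne' this
    · rintro ⟨h0, hk⟩
      refine ⟨hk, Nat.coprime_comm.mp ?_⟩
      exact (Nat.Prime.coprime_iff_not_dvd hp).mpr
        (fun hdvd => h0 (Nat.eq_zero_of_dvd_of_lt hdvd hk))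
  rw [hfil, Finset.sum_erase_eq_sub (mem_range.mpr hp.pos), my_geom_zero z p hz1 hzp, pow_zero]
  ring

lemma my_SC_two_prime {F : Type*} [Field F] (z : F) (p : ℕ) (hp : p.Prime) (hp2 : p ≠ 2)
    (hz : orderOf z = 2 * p) :
    ∑ k ∈ (range (2 * p)).filter (fun k => Nat.Coprime k (2 * p)), z ^ k = 1 := by
  have hz2p : z ^ (2 * p) = 1 := hz ▸ pow_orderOf_eq_one z
  have hz1 : z ≠ 1 := by
    intro h; rw [h, orderOf_one] at hz
    have := hp.two_le; omega
  have hzsq : z ^ 2 ≠ 1 := by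
    intro h
    have := orderOf_dvd_of_pow_eq_one h
    rw [hz] at this
    have := Nat.le_of_dvd (by norm_num) this
    have := hp.two_le; omega
  have hzp : z ^ p = -1 := by
    have h2 : (z ^ p) * (z ^ p) = 1 := by
      rw [← pow_add]
      have : p + p = 2 * p := by ring
      rw [this, hz2p]
    rcases mul_self_eq_one_iff.mp h2 with h | h
    · exfalso
      have := orderOf_dvd_of_pow_eq_one h
      rw [hz] at this
      have := Nat.le_of_dvd hp.pos this
      have := hp.two_le; omega
    · exact h
  have hz2p1 : (z ^ 2) ^ p = 1 := by rw [← pow_mul]; exact hz2p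
  -- total sum is zero
  have htot : ∑ k ∈ range (2 * p), z ^ k = 0 := my_geom_zero z (2 * p) hz1 hz2p
  have hsplit := Finset.sum_filter_add_sum_filter_not (range (2 * p))
    (fun k => Nat.Coprime k (2 * p)) (fun k => z ^ k)
  -- the non-coprime part
  have hncop : (range (2 * p)).filter (fun k => ¬ Nat.Coprime k (2 * p))
      = (range (2 * p)).filter (fun k => 2 ∣ k) ∪ (range (2 * p)).filter (fun k => p ∣ k) := by
    rw [← Finset.filter_or]
    apply Finset.filter_congr
    intro k _
    rw [Nat.coprime_mul_iff_right]

    constructor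
    · intro h
      by_contra hc
      push_neg at hc
      exact h ⟨Nat.coprime_comm.mp ((Nat.Prime.coprime_iff_not_dvd Nat.prime_two).mpr hc.1),
        Nat.coprime_comm.mp ((Nat.Prime.coprime_iff_not_dvd hp).mpr hc.2)⟩
    · rintro (h | h) ⟨h1, h2⟩
      · exact (Nat.Prime.coprime_iff_not_dvd Nat.prime_two).mp (Nat.coprime_comm.mp h1) h
      · exact (Nat.Prime.coprime_iff_not_dvd hp).mp (Nat.coprime_comm.mp h2) h
  have hinter : (range (2 * p)).filter (fun k => 2 ∣ k) ∩ (range (2 * p)).filter (fun k => p ∣ k)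
      = (range (2 * p)).filter (fun k => 2 * p ∣ k) := by
    rw [← Finset.filter_and]
    apply Finset.filter_congr
    intro k _
    constructor
    · rintro ⟨h2, hpk⟩
      exact (Nat.Coprime.mul_dvd_of_dvd_of_dvd
        ((Nat.Prime.coprime_iff_not_dvd Nat.prime_two).mpr (fun h => hp2 ((Nat.prime_dvd_prime_iff_eq Nat.prime_two hp).mp h).symm)) h2 hpk)
    · intro h
      exact ⟨dvd_trans ⟨p, rfl⟩ h, dvd_trans ⟨2, mul_comm 2 p⟩ h⟩
  have hsum2 : ∑ k ∈ (range (2 * p)).filter (fun k => 2 ∣ k), z ^ k = 0 := by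
    rw [my_mult_sum z 2 p (by norm_num)]
    exact my_geom_zero (z ^ 2) p hzsq hz2p1
  have hsump : ∑ k ∈ (range (2 * p)).filter (fun k => p ∣ k), z ^ k = 0 := by
    have h2p : 2 * p = p * 2 := mul_comm 2 p
    rw [h2p, my_mult_sum z p 2 hp.pos]
    rw [Finset.sum_range_succ, Finset.sum_range_one, pow_zero, pow_one, hzp]
    ring
  have hsum2p : ∑ k ∈ (range (2 * p)).filter (fun k => 2 * p ∣ k), z ^ k = 1 := by
    have h := my_mult_sum z (2 * p) 1 (Nat.mul_pos (by norm_num) hp.pos)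
    rw [mul_one] at h
    simpa using h
  have hunion := Finset.sum_union_inter (s₁ := (range (2 * p)).filter (fun k => 2 ∣ k))
    (s₂ := (range (2 * p)).filter (fun k => p ∣ k)) (f := fun k => z ^ k)
  rw [hinter, hsum2, hsump, hsum2p] at hunion
  have hncopval : ∑ k ∈ (range (2 * p)).filter (fun k => ¬ Nat.Coprime k (2 * p)), z ^ k = -1 := by
    rw [hncop]
    linear_combination hunion
  rw [htot, hncopval] at hsplit
  linear_combination hsplit

lemma my_SC_zero {F : Type*} [Field F] (z : F) (d r p : ℕ) (hp : 0 < p)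
    (hd : d = r * p) (hr1 : 0 < r) (hrd : r < d) (hord : orderOf z = d)
    (hP : ∀ a j, Nat.Coprime (r * a + j) d ↔ Nat.Coprime j d) :
    ∑ k ∈ (range d).filter (fun k => Nat.Coprime k d), z ^ k = 0 := by
  have hzd : z ^ d = 1 := hord ▸ pow_orderOf_eq_one z
  have hzr : z ^ r ≠ 1 := by
    intro h
    have hdvd := orderOf_dvd_of_pow_eq_one h
    rw [hord] at hdvd
    exact absurd (Nat.le_of_dvd hr1 hdvd) (not_le.mpr hrd)
  have hzrp : (z ^ r) ^ p = 1 := by rw [← pow_mul, ← hd, hzd]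
  rw [Finset.sum_filter]
  calc ∑ k ∈ range d, (if Nat.Coprime k d then z ^ k else 0)
      = ∑ a ∈ range p, ∑ j ∈ range r, (if Nat.Coprime (r * a + j) d then z ^ (r * a + j) else 0) := by
        rw [hd]; exact my_sum_decomp _ r p
    _ = ∑ a ∈ range p, (z ^ r) ^ a * ∑ j ∈ range r, (if Nat.Coprime j d then z ^ j else 0) := by
        refine Finset.sum_congr rfl fun a _ => ?_
        rw [Finset.mul_sum]
        refine Finset.sum_congr rfl fun j _ => ?_
        by_cases h : Nat.Coprime j d
        · rw [if_pos h, if_pos ((hP a j).mpr h), pow_add, pow_mul]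
        · rw [if_neg h, if_neg (fun hc => h ((hP a j).mp hc)), mul_zero]
    _ = (∑ a ∈ range p, (z ^ r) ^ a) * ∑ j ∈ range r, (if Nat.Coprime j d then z ^ j else 0) := by
        rw [← Finset.sum_mul]
    _ = 0 := by rw [my_geom_zero (z ^ r) p hzr hzrp, zero_mul]

lemma my_orbit_sum {F : Type*} [Field F] (z : F) (d : ℕ) [NeZero d] (hd1 : 1 < d)
    (hord : orderOf z = d)
    (u3 : (ZMod d)ˣ) (hu3 : (u3 : ZMod d) = 3)
    (hgen : orderOf u3 = Fintype.card (ZMod d)ˣ) :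
    ∑ j ∈ range (Fintype.card (ZMod d)ˣ), z ^ 3 ^ j
      = ∑ k ∈ (range d).filter (fun k => Nat.Coprime k d), z ^ k := by
  have hzd : z ^ d = 1 := hord ▸ pow_orderOf_eq_one z
  have hval : ∀ j : ℕ, ((u3 ^ j : (ZMod d)ˣ) : ZMod d).val = 3 ^ j % d := by
    intro j
    rw [Units.val_pow_eq_pow_val, hu3]
    have : ((3 : ZMod d)) = ((3 : ℕ) : ZMod d) := by push_cast; rfl
    rw [this, ← Nat.cast_pow, ZMod.val_natCast]
  apply Finset.sum_bij (fun j _ => ((u3 ^ j : (ZMod d)ˣ) : ZMod d).val)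
  · intro j hj
    rw [Finset.mem_filter, Finset.mem_range]
    exact ⟨ZMod.val_lt _, ZMod.val_coe_unit_coprime (u3 ^ j)⟩
  · intro j1 hj1 j2 hj2 hval_eq
    have h1 : (u3 : (ZMod d)ˣ) ^ j1 = u3 ^ j2 := by
      apply Units.ext
      exact ZMod.val_injective d hval_eq
    have hmod := pow_eq_pow_iff_modEq.mp h1
    rw [hgen] at hmod
    exact Nat.ModEq.eq_of_lt_of_lt hmod (Finset.mem_range.mp hj1) (Finset.mem_range.mp hj2)
  · intro k hk
    rw [Finset.mem_filter, Finset.mem_range] at hk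
    obtain ⟨hklt, hkcop⟩ := hk
    set u : (ZMod d)ˣ := ZMod.unitOfCoprime k hkcop with hu
    have hmem : u ∈ Submonoid.powers u3 := by
      rw [mem_powers_iff_mem_zpowers]
      have htop : Subgroup.zpowers u3 = ⊤ := by
        apply Subgroup.eq_top_of_card_eq
        rw [Nat.card_zpowers, hgen, Nat.card_eq_fintype_card]
      rw [htop]; trivial
    obtain ⟨n, hn⟩ := hmem
    have hcpos : 0 < Fintype.card (ZMod d)ˣ := Fintype.card_pos
    refine ⟨n % Fintype.card (ZMod d)ˣ, Finset.mem_range.mpr (Nat.mod_lt _ hcpos), ?_⟩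
    have : u3 ^ (n % Fintype.card (ZMod d)ˣ) = u := by
      rw [← hgen, pow_mod_orderOf]; exact hn
    rw [this, hu]
    have : ((ZMod.unitOfCoprime k hkcop : (ZMod d)ˣ) : ZMod d) = (k : ZMod d) :=
      ZMod.coe_unitOfCoprime k hkcop
    rw [this, ZMod.val_natCast, Nat.mod_eq_of_lt hklt]
  · intro j hj
    rw [hval j]
    exact my_pow_mod z d hzd (3 ^ j)

lemma my_frob_sum {F : Type*} [Field F] [Fintype F] [Algebra (ZMod 3) F] (e : ℕ) (hq : Fintype.card F = 3 ^ e) (z : F) :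
    algebraMap (ZMod 3) F (Algebra.trace (ZMod 3) F z) = ∑ i ∈ range e, z ^ 3 ^ i := by
  haveI : Fact (Nat.Prime 3) := ⟨by norm_num⟩
  haveI := Classical.decEq F
  haveI : CharP F 3 := charP_of_injective_algebraMap' (ZMod 3) (A := F) 3
  haveI : Module.Finite (ZMod 3) F := Module.Finite.of_finite
  -- frobenius as algebra aut
  let fh : F →ₐ[ZMod 3] F :=
    { frobenius F 3 with
      commutes' := fun c => by
        show frobenius F 3 (algebraMap (ZMod 3) F c) = algebraMap (ZMod 3) F c
        rw [frobenius_def, ← map_pow, ZMod.pow_card] }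
  let φ : F ≃ₐ[ZMod 3] F :=
    AlgEquiv.ofBijective fh (Finite.injective_iff_bijective.mp fh.toRingHom.injective)
  have hφ : ∀ w : F, φ w = w ^ 3 := fun w => rfl
  have hpow : ∀ (i : ℕ) (w : F), (φ ^ i) w = w ^ 3 ^ i := by
    intro i
    induction i with
    | zero => intro w; simp
    | succ n ih =>
      intro w
      rw [pow_succ, AlgEquiv.mul_apply, hφ, ih, ← pow_mul, pow_succ, mul_comm]
  -- e = finrank
  have hrank : Module.finrank (ZMod 3) F = e := by
    have h1 : Fintype.card F = 3 ^ Module.finrank (ZMod 3) F := by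
      have := Module.card_eq_pow_finrank (K := ZMod 3) (V := F)
      rwa [ZMod.card] at this
    exact Nat.pow_right_injective (by norm_num : 2 ≤ 3) (h1.symm.trans hq)
  have hcard : Fintype.card (F ≃ₐ[ZMod 3] F) = e := by
    rw [← Nat.card_eq_fintype_card, IsGalois.card_aut_eq_finrank, hrank]
  -- the map Fin e → Aut is bijective
  obtain ⟨g, hg⟩ := IsCyclic.exists_generator (α := Fˣ)
  have hgord : orderOf g = Fintype.card F - 1 := by
    rw [orderOf_eq_card_of_forall_mem_zpowers hg, Nat.card_eq_fintype_card, Fintype.card_units]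
  have he : 0 < e := by
    rcases Nat.eq_zero_or_pos e with h | h
    · exfalso; rw [h, pow_zero] at hq; exact absurd hq Fintype.one_lt_card.ne'
    · exact h
  have hinj : Function.Injective (fun i : Fin e => φ ^ (i : ℕ)) := by
    intro i j hij
    have h3 : ∀ k : ℕ, k < e → 3 ^ k < Fintype.card F - 1 := by
      intro k hk
      have : (3:ℕ) ^ k < 3 ^ e - 1 := by
        have h1 : 3 ^ (k+1) ≤ 3 ^ e := Nat.pow_le_pow_right (by norm_num) hk
        have h2 : (3:ℕ) ^ k + 1 < 3 ^ (k+1) := by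
          have : (3:ℕ)^k ≥ 1 := Nat.one_le_pow _ _ (by norm_num)
          calc (3:ℕ)^k + 1 < 3 * 3^k := by omega
          _ = 3 ^ (k+1) := by ring
        omega
      rwa [hq]
    have hval := congrArg (fun ψ : F ≃ₐ[ZMod 3] F => ψ (g : F)) hij
    simp only [hpow] at hval
    rw [← Units.val_pow_eq_pow_val, ← Units.val_pow_eq_pow_val] at hval
    have hmod := pow_eq_pow_iff_modEq.mp (Units.ext hval)
    rw [hgord] at hmod
    have := Nat.ModEq.eq_of_lt_of_lt hmod (h3 _ i.isLt) (h3 _ j.isLt)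
    exact Fin.ext (Nat.pow_right_injective (by norm_num) this)
  have hbij : Function.Bijective (fun i : Fin e => φ ^ (i : ℕ)) :=
    (Fintype.bijective_iff_injective_and_card _).mpr ⟨hinj, by simp [hcard]⟩
  rw [trace_eq_sum_automorphisms]
  rw [← Fintype.sum_bijective _ hbij (fun i : Fin e => z ^ 3 ^ (i:ℕ)) (fun σ => σ z)
    (fun i => (hpow i z).symm)]
  exact Fin.sum_univ_eq_sum_range (fun i => z ^ 3 ^ i) e

lemma my_prim_transfer (n d : ℕ) [NeZero n] (hd : d ∣ n) (hd1 : 1 < d)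
    (h3n : Nat.Coprime 3 n)
    (hprim : orderOf (3 : ZMod n) = n.totient) (h3d : Nat.Coprime 3 d) :
    haveI : NeZero d := ⟨by omega⟩
    orderOf (ZMod.unitOfCoprime 3 h3d : (ZMod d)ˣ) = Fintype.card (ZMod d)ˣ
      ∧ d.totient ∣ n.totient := by
  haveI : NeZero d := ⟨by omega⟩
  set u3n : (ZMod n)ˣ := ZMod.unitOfCoprime 3 h3n with hu3n
  have hordn : orderOf u3n = Fintype.card (ZMod n)ˣ := by
    rw [← orderOf_units, ZMod.coe_unitOfCoprime, ZMod.card_units_eq_totient]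
    · exact_mod_cast hprim
  have htopn : Subgroup.zpowers u3n = ⊤ := by
    apply Subgroup.eq_top_of_card_eq
    rw [Nat.card_zpowers, hordn, Nat.card_eq_fintype_card]
  set f := ZMod.unitsMap hd with hf
  have hfsurj : Function.Surjective f := ZMod.unitsMap_surjective hd
  have hfu : f u3n = ZMod.unitOfCoprime 3 h3d := by
    apply Units.ext
    rw [hf, ZMod.unitsMap]
    show (ZMod.castHom hd (ZMod d)) ((u3n : ZMod n)) = _
    rw [ZMod.coe_unitOfCoprime, ZMod.coe_unitOfCoprime]
    exact map_ofNat (ZMod.castHom hd (ZMod d)) 3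
  have htopd : Subgroup.zpowers (f u3n) = ⊤ := by
    rw [← MonoidHom.map_zpowers, htopn]
    exact Subgroup.map_top_of_surjective f hfsurj
  have hgen : orderOf (f u3n) = Fintype.card (ZMod d)ˣ := by
    rw [← Nat.card_eq_fintype_card]
    apply orderOf_eq_card_of_forall_mem_zpowers
    intro x
    rw [htopd]; trivial
  constructor
  · rw [← hfu]; exact hgen
  · have h1 : orderOf (f u3n) ∣ orderOf u3n := orderOf_map_dvd f u3n
    rw [hgen, hordn, ZMod.card_units_eq_totient, ZMod.card_units_eq_totient] at h1
    exact h1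

lemma my_trace_orbit {F : Type*} [Field F] [Fintype F] [Algebra (ZMod 3) F] (e : ℕ)
    (hq : Fintype.card F = 3 ^ e) (z : F) (d : ℕ) [NeZero d] (hd1 : 1 < d)
    (hord : orderOf z = d)
    (u3 : (ZMod d)ˣ) (hu3 : (u3 : ZMod d) = 3)
    (hgen : orderOf u3 = Fintype.card (ZMod d)ˣ)
    (hdvd : d.totient ∣ e) :
    algebraMap (ZMod 3) F (Algebra.trace (ZMod 3) F z)
      = (e / d.totient : ℕ) • ∑ k ∈ (range d).filter (fun k => Nat.Coprime k d), z ^ k := by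
  have hzd : z ^ d = 1 := hord ▸ pow_orderOf_eq_one z
  have hcard : Fintype.card (ZMod d)ˣ = d.totient := ZMod.card_units_eq_totient d
  set t := d.totient with htdef
  have h3t : 3 ^ t ≡ 1 [MOD d] := by
    have h1 : (u3 : ZMod d) ^ t = 1 := by
      rw [← Units.val_pow_eq_pow_val, ← hcard, ← hgen, pow_orderOf_eq_one, Units.val_one]
    rw [hu3] at h1
    have h2 : (((3 : ℕ) ^ t : ℕ) : ZMod d) = ((1 : ℕ) : ZMod d) := by push_cast; exact_mod_cast h1
    exact (ZMod.natCast_eq_natCast_iff _ _ _).mp h2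
  have hper : ∀ a j : ℕ, z ^ 3 ^ (t * a + j) = z ^ 3 ^ j := by
    intro a j
    apply my_pow_congr z d hzd
    calc (3:ℕ) ^ (t * a + j) = (3 ^ t) ^ a * 3 ^ j := by rw [pow_add, pow_mul]
    _ ≡ 1 ^ a * 3 ^ j [MOD d] := Nat.ModEq.mul (Nat.ModEq.pow a h3t) (Nat.ModEq.refl _)
    _ = 3 ^ j := by rw [one_pow, one_mul]
  rw [my_frob_sum e hq z]
  obtain ⟨c, hc⟩ := hdvd
  rw [hc, Nat.mul_div_cancel_left c (Nat.totient_pos.mpr (by omega))]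
  rw [my_sum_decomp (fun i => z ^ 3 ^ i) t c]
  have : ∀ a ∈ range c, ∑ j ∈ range t, z ^ 3 ^ (t * a + j) = ∑ j ∈ range t, z ^ 3 ^ j :=
    fun a _ => Finset.sum_congr rfl fun j _ => hper a j
  rw [Finset.sum_congr rfl this, Finset.sum_const, ← my_orbit_sum z d hd1 hord u3 hu3 hgen, hcard]
  rw [Finset.card_range]

end MyAuxST18

open Finset in
/-- Proposition 4.3 of the paper: the traces of `x^{(q−1)/ℓ^m}` and
`x^{(q−1)/(2ℓ^m)}` according to the partition `F₁,…,F₆` of `F∖{0}`. -/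
theorem statement_18 (ℓ m : ℕ) (hℓ : ℓ.Prime) (hℓ3 : 3 < ℓ) (hm : 0 < m)
    (hprim : orderOf ((3 : ZMod (2 * ℓ ^ m))) = (2 * ℓ ^ m).totient)
    (F : Type*) [Field F] [Fintype F] [Algebra (ZMod 3) F]
    (hq : Fintype.card F = 3 ^ (2 * ℓ ^ m).totient)
    (k2 k1 k2' k1' : ℕ)
    (hk2 : k2 = (Fintype.card F - 1) / (2 * ℓ ^ m))
    (hk1 : k1 = (Fintype.card F - 1) / ℓ ^ m)
    (hk2' : k2' = (Fintype.card F - 1) / (2 * ℓ ^ (m - 1)))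
    (hk1' : k1' = (Fintype.card F - 1) / ℓ ^ (m - 1))
    (x : F) (hx : x ≠ 0) :
    (ℓ % 3 = 1 →
      ((memF1 k2 k1 k2' k1' x ∨ memF2 k2 k1 k2' k1' x ∨ memF3 k2 k1 k2' k1' x ∨
          memF6 k2 k1 k2' k1' x) → Algebra.trace (ZMod 3) F (x ^ k1) = 0) ∧
      ((memF4 k2 k1 k2' k1' x ∨ memF5 k2 k1 k2' k1' x) →
          Algebra.trace (ZMod 3) F (x ^ k1) = -1) ∧
      ((memF1 k2 k1 k2' k1' x ∨ memF3 k2 k1 k2' k1' x ∨ memF6 k2 k1 k2' k1' x) →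
          Algebra.trace (ZMod 3) F (x ^ k2) = 0) ∧
      ((memF2 k2 k1 k2' k1' x ∨ memF5 k2 k1 k2' k1' x) →
          Algebra.trace (ZMod 3) F (x ^ k2) = 1) ∧
      (memF4 k2 k1 k2' k1' x → Algebra.trace (ZMod 3) F (x ^ k2) = -1)) ∧
    (ℓ % 3 = 2 →
      ((memF1 k2 k1 k2' k1' x ∨ memF2 k2 k1 k2' k1' x ∨ memF3 k2 k1 k2' k1' x) →
          Algebra.trace (ZMod 3) F (x ^ k1) = (-1 : ZMod 3) ^ (m - 1)) ∧
      ((memF4 k2 k1 k2' k1' x ∨ memF5 k2 k1 k2' k1' x) →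
          Algebra.trace (ZMod 3) F (x ^ k1) = (-1 : ZMod 3) ^ m) ∧
      (memF6 k2 k1 k2' k1' x → Algebra.trace (ZMod 3) F (x ^ k1) = 0) ∧
      ((memF1 k2 k1 k2' k1' x ∨ memF5 k2 k1 k2' k1' x) →
          Algebra.trace (ZMod 3) F (x ^ k2) = (-1 : ZMod 3) ^ (m - 1)) ∧
      ((memF3 k2 k1 k2' k1' x ∨ memF4 k2 k1 k2' k1' x) →
          Algebra.trace (ZMod 3) F (x ^ k2) = (-1 : ZMod 3) ^ m) ∧
      ((memF2 k2 k1 k2' k1' x ∨ memF6 k2 k1 k2' k1' x) →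
          Algebra.trace (ZMod 3) F (x ^ k2) = 0)) := by
  obtain ⟨m', rfl⟩ : ∃ m'', m = m'' + 1 := ⟨m - 1, by omega⟩
  simp only [Nat.add_sub_cancel] at hk2' hk1' ⊢
  simp only [memF1, memF2, memF3, memF4, memF5, memF6]
  haveI : Fact (Nat.Prime 3) := ⟨by norm_num⟩
  haveI : Fact (2 < 3) := ⟨by norm_num⟩
  haveI : CharP F 3 := charP_of_injective_algebraMap' (ZMod 3) (A := F) 3
  have hℓ1 : 1 < ℓ := hℓ.one_lt
  have hℓodd : Odd ℓ := hℓ.odd_of_ne_two (by omega)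
  set n := 2 * ℓ ^ (m' + 1) with hn
  have hℓpow_pos : ∀ b : ℕ, 0 < ℓ ^ b := fun b => pow_pos hℓ.pos b
  have hn1 : 1 < n := by
    have := hℓpow_pos (m' + 1); omega
  haveI : NeZero n := ⟨by omega⟩
  set e := n.totient with he
  have hnodvd : ¬ 2 ∣ ℓ ^ (m' + 1) := by
    intro h
    have h2 : 2 ∣ ℓ := Nat.Prime.dvd_of_dvd_pow Nat.prime_two h
    have := (Nat.prime_dvd_prime_iff_eq Nat.prime_two hℓ).mp h2
    omega
  have hcop2ℓm : Nat.Coprime 2 (ℓ ^ (m' + 1)) :=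
    (Nat.Prime.coprime_iff_not_dvd Nat.prime_two).mpr hnodvd
  have he_val : e = ℓ ^ m' * (ℓ - 1) := by
    rw [he, hn, Nat.totient_mul hcop2ℓm, Nat.totient_two,
      Nat.totient_prime_pow hℓ (Nat.succ_pos m'), one_mul]
    norm_num
  have he_pos : 0 < e := by
    rw [he_val]
    exact Nat.mul_pos (hℓpow_pos m') (by omega)
  -- n divides q - 1
  have h3n : Nat.Coprime 3 n := by
    apply (Nat.Prime.coprime_iff_not_dvd (by norm_num)).mpr
    intro h
    rcases (Nat.Prime.dvd_mul (by norm_num)).mp h with h | h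
    · omega
    · have h3 : (3:ℕ) ∣ ℓ := Nat.Prime.dvd_of_dvd_pow (by norm_num) h
      have := (Nat.prime_dvd_prime_iff_eq (by norm_num) hℓ).mp h3
      omega
  have hdvd : n ∣ Fintype.card F - 1 := by
    have h1 : (3 : ZMod n) ^ e = 1 := by rw [← hprim]; exact pow_orderOf_eq_one _
    have h2 : ((3 ^ e : ℕ) : ZMod n) = ((1 : ℕ) : ZMod n) := by push_cast; exact_mod_cast h1
    have h3 := (ZMod.natCast_eq_natCast_iff _ _ _).mp h2
    have h4 : n ∣ 3 ^ e - 1 := (Nat.modEq_iff_dvd' (Nat.one_le_pow _ _ (by norm_num))).mp h3.symm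
    rwa [hq]
  have hcard_big : 2 ≤ Fintype.card F := Fintype.one_lt_card
  have hk2n : k2 * n = Fintype.card F - 1 := by rw [hk2]; exact Nat.div_mul_cancel hdvd
  have hyn : (x ^ k2) ^ n = 1 := by
    rw [← pow_mul, hk2n]
    exact FiniteField.pow_card_sub_one_eq_one x hx
  have hxk1 : x ^ k1 = (x ^ k2) ^ 2 := by
    have hk : k1 = k2 * 2 := by
      rw [hk1, ← hk2n]
      have : k2 * n = k2 * 2 * ℓ ^ (m' + 1) := by rw [hn]; ring
      rw [this, Nat.mul_div_cancel _ (hℓpow_pos (m' + 1))]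
    rw [hk, pow_mul]
  have hxk2' : x ^ k2' = (x ^ k2) ^ ℓ := by
    have hk : k2' = k2 * ℓ := by
      rw [hk2', ← hk2n]
      have : k2 * n = k2 * ℓ * (2 * ℓ ^ m') := by rw [hn, pow_succ]; ring
      rw [this, Nat.mul_div_cancel _ (by have := hℓpow_pos m'; omega)]
    rw [hk, pow_mul]
  have hxk1' : x ^ k1' = (x ^ k2) ^ (2 * ℓ) := by
    have hk : k1' = k2 * (2 * ℓ) := by
      rw [hk1', ← hk2n]
      have : k2 * n = k2 * (2 * ℓ) * ℓ ^ m' := by rw [hn, pow_succ]; ring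
      rw [this, Nat.mul_div_cancel _ (hℓpow_pos m')]
    rw [hk, pow_mul]
  have hinj : Function.Injective (algebraMap (ZMod 3) F) := (algebraMap (ZMod 3) F).injective
  -- trace of 1 and -1
  have htr_one : Algebra.trace (ZMod 3) F 1 = ((e : ℕ) : ZMod 3) := by
    apply hinj
    rw [my_frob_sum e hq 1, map_natCast]
    simp
  have htr_neg_one : Algebra.trace (ZMod 3) F (-1) = -((e : ℕ) : ZMod 3) := by
    rw [show ((-1 : F)) = -(1 : F) from rfl, map_neg, htr_one]
  -- master formula
  have hH : ∀ (z : F) (d : ℕ), 1 < d → d ∣ n → orderOf z = d →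
      algebraMap (ZMod 3) F (Algebra.trace (ZMod 3) F z)
        = (e / d.totient : ℕ) • ∑ k ∈ (range d).filter (fun k => Nat.Coprime k d), z ^ k := by
    intro z d hd1 hdn hord
    haveI : NeZero d := ⟨by omega⟩
    have h3d : Nat.Coprime 3 d := Nat.Coprime.coprime_dvd_right hdn h3n
    obtain ⟨hgen, hdtot⟩ := my_prim_transfer n d hdn hd1 h3n hprim h3d
    exact my_trace_orbit e hq z d hd1 hord (ZMod.unitOfCoprime 3 h3d)
      (by rw [ZMod.coe_unitOfCoprime]; push_cast; rfl) hgen hdtot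
  have hcdiv : e / (ℓ - 1) = ℓ ^ m' := by
    rw [he_val, Nat.mul_div_cancel _ (by omega)]
  -- trace on elements of order ℓ
  have htrℓ : ∀ z : F, orderOf z = ℓ → Algebra.trace (ZMod 3) F z = -((ℓ ^ m' : ℕ) : ZMod 3) := by
    intro z hz
    apply hinj
    have hdn : ℓ ∣ n := ⟨2 * ℓ ^ m', by rw [hn, pow_succ]; ring⟩
    rw [hH z ℓ hℓ1 hdn hz, my_SC_prime z ℓ hℓ hz, Nat.totient_prime hℓ, hcdiv,
      map_neg, map_natCast]
    rw [nsmul_eq_mul]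
    push_cast
    ring
  -- trace on elements of order 2ℓ
  have htr2ℓ : ∀ z : F, orderOf z = 2 * ℓ →
      Algebra.trace (ZMod 3) F z = ((ℓ ^ m' : ℕ) : ZMod 3) := by
    intro z hz
    apply hinj
    have hdn : 2 * ℓ ∣ n := ⟨ℓ ^ m', by rw [hn, pow_succ]; ring⟩
    have htot2ℓ : (2 * ℓ).totient = ℓ - 1 := by
      rw [Nat.totient_mul ((Nat.Prime.coprime_iff_not_dvd Nat.prime_two).mpr
        (fun h => by have := (Nat.prime_dvd_prime_iff_eq Nat.prime_two hℓ).mp h; omega)),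
        Nat.totient_two, Nat.totient_prime hℓ, one_mul]
    rw [hH z (2 * ℓ) (by omega) hdn hz, my_SC_two_prime z ℓ hℓ (by omega) hz, htot2ℓ, hcdiv,
      map_natCast]
    rw [nsmul_eq_mul, mul_one]
  -- trace zero on elements of order ℓ^b, 2ℓ^b for b ≥ 2
  have htr0 : ∀ (z : F) (b : ℕ), 2 ≤ b → b ≤ m' + 1 →
      (orderOf z = ℓ ^ b ∨ orderOf z = 2 * ℓ ^ b) → Algebra.trace (ZMod 3) F z = 0 := by
    intro z b hb2 hbm hzcase
    apply hinj
    rw [map_zero]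
    have hℓdvdr : ℓ ∣ ℓ ^ (b - 1) := dvd_pow_self ℓ (by omega)
    rcases hzcase with hord | hord
    · have hd1 : 1 < ℓ ^ b := Nat.one_lt_pow (by omega) hℓ1
      have hdn : ℓ ^ b ∣ n := dvd_mul_of_dvd_right (pow_dvd_pow ℓ hbm) 2
      have hP : ∀ a j, Nat.Coprime (ℓ ^ (b - 1) * a + j) (ℓ ^ b) ↔ Nat.Coprime j (ℓ ^ b) := by
        intro a j
        have key : ∀ k : ℕ, Nat.Coprime k ℓ ↔ ¬ ℓ ∣ k := fun k =>
          Nat.coprime_comm.trans (Nat.Prime.coprime_iff_not_dvd hℓ)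
        rw [Nat.coprime_pow_right_iff (by omega : 0 < b),
          Nat.coprime_pow_right_iff (by omega : 0 < b), key, key,
          Nat.dvd_add_right (Dvd.dvd.mul_right hℓdvdr a)]
      rw [hH z (ℓ ^ b) hd1 hdn hord,
        my_SC_zero z (ℓ ^ b) (ℓ ^ (b - 1)) ℓ hℓ.pos
          (by rw [← pow_succ]; congr 1; omega) (hℓpow_pos (b - 1))
          (Nat.pow_lt_pow_right hℓ1 (by omega)) hord hP, smul_zero]
    · have hd1 : 1 < 2 * ℓ ^ b := by have := hℓpow_pos b; omega
      have hdn : 2 * ℓ ^ b ∣ n := mul_dvd_mul_left 2 (pow_dvd_pow ℓ hbm)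
      have h2r : 2 ∣ 2 * ℓ ^ (b - 1) := ⟨ℓ ^ (b - 1), rfl⟩
      have hℓr : ℓ ∣ 2 * ℓ ^ (b - 1) := Dvd.dvd.mul_left hℓdvdr 2
      have hP : ∀ a j, Nat.Coprime (2 * ℓ ^ (b - 1) * a + j) (2 * ℓ ^ b)
          ↔ Nat.Coprime j (2 * ℓ ^ b) := by
        intro a j
        have key : ∀ k : ℕ, Nat.Coprime k ℓ ↔ ¬ ℓ ∣ k := fun k =>
          Nat.coprime_comm.trans (Nat.Prime.coprime_iff_not_dvd hℓ)
        have key2 : ∀ k : ℕ, Nat.Coprime k 2 ↔ ¬ 2 ∣ k := fun k =>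
          Nat.coprime_comm.trans (Nat.Prime.coprime_iff_not_dvd Nat.prime_two)
        rw [Nat.coprime_mul_iff_right, Nat.coprime_mul_iff_right,
          Nat.coprime_pow_right_iff (by omega : 0 < b),
          Nat.coprime_pow_right_iff (by omega : 0 < b),
          key, key, key2, key2,
          Nat.dvd_add_right (Dvd.dvd.mul_right hℓr a), Nat.dvd_add_right (Dvd.dvd.mul_right h2r a)]
      rw [hH z (2 * ℓ ^ b) hd1 hdn hord,
        my_SC_zero z (2 * ℓ ^ b) (2 * ℓ ^ (b - 1)) ℓ hℓ.pos
          (by rw [mul_assoc, ← pow_succ]; congr 2; omega) (by have := hℓpow_pos (b - 1); omega)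
          (by have h := Nat.pow_lt_pow_right hℓ1 (show b - 1 < b by omega); omega)
          hord hP, smul_zero]
  -- order classifications
  have hord_p : ∀ w : F, w ≠ 1 → w ^ ℓ = 1 → orderOf w = ℓ := by
    intro w hw1 hwl
    rcases hℓ.eq_one_or_self_of_dvd _ (orderOf_dvd_of_pow_eq_one hwl) with h | h
    · exact absurd (orderOf_eq_one_iff.mp h) hw1
    · exact h
  have hA3 : ∀ _ : x ^ k2 ≠ 1, x ^ k1 = 1 → x ^ k2 = -1 := by
    intro h1 h2
    rw [hxk1] at h2
    rcases mul_self_eq_one_iff.mp (by rw [← pow_two (x ^ k2)]; exact h2 : (x ^ k2) * (x ^ k2) = 1) with h | h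
    · exact absurd h h1
    · exact h
  have hA2 : ¬ (x ^ k2 ≠ 1 ∧ x ^ k1 = 1 ∧ x ^ k2' = 1) := by
    rintro ⟨h1, h2, h3⟩
    rw [hxk2', hA3 h1 h2, hℓodd.neg_one_pow] at h3
    exact CharP.neg_one_ne_one F 3 h3
  have hA4 : x ^ k2 ≠ 1 → x ^ k1 ≠ 1 → x ^ k2' = 1 →
      orderOf (x ^ k2) = ℓ ∧ orderOf (x ^ k1) = ℓ := by
    intro h1 h2 h3
    rw [hxk2'] at h3
    constructor
    · exact hord_p _ h1 h3
    · rw [hxk1]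
      apply hord_p _ (by rw [← hxk1]; exact h2)
      rw [← pow_mul, mul_comm, pow_mul, h3, one_pow]
  have hA5 : x ^ k2 ≠ 1 → x ^ k1 ≠ 1 → x ^ k2' ≠ 1 → x ^ k1' = 1 →
      orderOf (x ^ k2) = 2 * ℓ ∧ orderOf (x ^ k1) = ℓ := by
    intro h1 h2 h3 h4
    rw [hxk1'] at h4
    have hddvd : orderOf (x ^ k2) ∣ 2 * ℓ := orderOf_dvd_of_pow_eq_one h4
    have hcopd2 : ¬ orderOf (x ^ k2) ∣ 2 := by
      intro h
      have : (x ^ k2) ^ 2 = 1 := orderOf_dvd_iff_pow_eq_one.mp h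
      rw [← hxk1] at this
      exact h2 this
    have hcopdℓ : ¬ orderOf (x ^ k2) ∣ ℓ := by
      intro h
      have : (x ^ k2) ^ ℓ = 1 := orderOf_dvd_iff_pow_eq_one.mp h
      rw [← hxk2'] at this
      exact h3 this
    have hd2ℓ : orderOf (x ^ k2) = 2 * ℓ := by
      by_cases h2d : 2 ∣ orderOf (x ^ k2)
      · by_cases hld : ℓ ∣ orderOf (x ^ k2)
        · apply Nat.dvd_antisymm hddvd
          exact Nat.Coprime.mul_dvd_of_dvd_of_dvd
            ((Nat.Prime.coprime_iff_not_dvd Nat.prime_two).mpr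
              (fun h => by have := (Nat.prime_dvd_prime_iff_eq Nat.prime_two hℓ).mp h; omega))
            h2d hld
        · exfalso
          apply hcopd2
          exact (Nat.coprime_comm.mp ((Nat.Prime.coprime_iff_not_dvd hℓ).mpr hld)).dvd_of_dvd_mul_right hddvd
      · exfalso
        apply hcopdℓ
        exact (Nat.coprime_comm.mp ((Nat.Prime.coprime_iff_not_dvd Nat.prime_two).mpr h2d)).dvd_of_dvd_mul_left hddvd
    refine ⟨hd2ℓ, ?_⟩
    rw [hxk1]
    apply hord_p _ (by rw [← hxk1]; exact h2)
    have hpm : ((x ^ k2) ^ 2) ^ ℓ = (x ^ k2) ^ (2 * ℓ) := by rw [← pow_mul]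
    rw [hpm]
    exact h4
  have hA6 : x ^ k2 ≠ 1 → x ^ k1 ≠ 1 → x ^ k2' ≠ 1 → x ^ k1' ≠ 1 →
      (∃ b, 2 ≤ b ∧ b ≤ m' + 1 ∧ (orderOf (x ^ k2) = ℓ ^ b ∨ orderOf (x ^ k2) = 2 * ℓ ^ b)) ∧
      (∃ b, 2 ≤ b ∧ b ≤ m' + 1 ∧ (orderOf (x ^ k1) = ℓ ^ b ∨ orderOf (x ^ k1) = 2 * ℓ ^ b)) := by
    intro h1 h2 h3 h4
    rw [hxk1'] at h4
    have hddvd : orderOf (x ^ k2) ∣ n := orderOf_dvd_of_pow_eq_one hyn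
    have hshape : ∀ d' : ℕ, d' ∣ n → ∃ b ≤ m' + 1, d' = ℓ ^ b ∨ d' = 2 * ℓ ^ b := by
      intro d' hdiv
      rw [hn] at hdiv
      by_cases h2d : 2 ∣ d'
      · obtain ⟨d'', rfl⟩ := h2d
        have hd'' : d'' ∣ ℓ ^ (m' + 1) := by
          have := hdiv
          exact (mul_dvd_mul_iff_left (two_ne_zero)).mp this
        obtain ⟨b, hb, rfl⟩ := (Nat.dvd_prime_pow hℓ).mp hd''
        exact ⟨b, hb, Or.inr rfl⟩
      · have hcop : Nat.Coprime d' 2 :=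
          Nat.coprime_comm.mp ((Nat.Prime.coprime_iff_not_dvd Nat.prime_two).mpr h2d)
        have : d' ∣ ℓ ^ (m' + 1) := hcop.dvd_of_dvd_mul_left hdiv
        obtain ⟨b, hb, rfl⟩ := (Nat.dvd_prime_pow hℓ).mp this
        exact ⟨b, hb, Or.inl rfl⟩
    obtain ⟨b, hbm, hbcase⟩ := hshape _ hddvd
    have hnot2ℓ : ¬ orderOf (x ^ k2) ∣ 2 * ℓ := by
      intro h
      exact h4 (orderOf_dvd_iff_pow_eq_one.mp h)
    have hb2 : 2 ≤ b := by
      by_contra hb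
      push_neg at hb
      apply hnot2ℓ
      have hpd : ℓ ^ b ∣ ℓ := by
        have := pow_dvd_pow ℓ (show b ≤ 1 by omega)
        simpa using this
      rcases hbcase with h | h
      · rw [h]
        exact dvd_mul_of_dvd_right hpd 2
      · rw [h]
        exact mul_dvd_mul_left 2 hpd
    refine ⟨⟨b, hb2, hbm, hbcase⟩, ?_⟩
    -- order of x^k1 = (x^k2)^2
    have hzlb : (x ^ k1) ^ (ℓ ^ b) = 1 := by
      rw [hxk1, ← pow_mul]
      rcases hbcase with h | h
      · rw [mul_comm, pow_mul, ← h, pow_orderOf_eq_one, one_pow]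
      · rw [← h, pow_orderOf_eq_one]
    have hzldvd : orderOf (x ^ k1) ∣ ℓ ^ b := orderOf_dvd_of_pow_eq_one hzlb
    obtain ⟨b', hb', hordz⟩ := (Nat.dvd_prime_pow hℓ).mp hzldvd
    have hb2' : 2 ≤ b' := by
      by_contra hbb
      push_neg at hbb
      have hdl : orderOf (x ^ k1) ∣ ℓ := by
        rw [hordz]
        have := pow_dvd_pow ℓ (show b' ≤ 1 by omega)
        simpa using this
      have hpow1 : (x ^ k1) ^ ℓ = 1 := orderOf_dvd_iff_pow_eq_one.mp hdl
      apply h4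
      rw [hxk1, ← pow_mul] at hpow1
      exact hpow1
    exact ⟨b', hb2', by omega, Or.inl hordz⟩
  -- cast computations
  have hl1c : ℓ % 3 = 1 → (ℓ : ZMod 3) = 1 := fun h => by
    rw [← ZMod.natCast_mod, h, Nat.cast_one]
  have hl2c : ℓ % 3 = 2 → (ℓ : ZMod 3) = -1 := fun h => by
    rw [← ZMod.natCast_mod, h, two_nat_zmod3]
  have hecast : ((e : ℕ) : ZMod 3) = (ℓ : ZMod 3) ^ m' * ((ℓ : ZMod 3) - 1) := by
    rw [he_val]
    push_cast [Nat.cast_sub (show 1 ≤ ℓ by omega)]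
    ring
  have hpcast : ((ℓ ^ m' : ℕ) : ZMod 3) = (ℓ : ZMod 3) ^ m' := by push_cast; ring
  constructor
  · intro h1
    have E0 : ((e : ℕ) : ZMod 3) = 0 := by rw [hecast, hl1c h1]; ring
    have P1 : ((ℓ ^ m' : ℕ) : ZMod 3) = 1 := by rw [hpcast, hl1c h1, one_pow]
    refine ⟨?_, ?_, ?_, ?_, ?_⟩
    · rintro (h | h | h | h)
      · rw [hxk1, h, one_pow, htr_one, E0]
      · exact absurd h hA2
      · obtain ⟨ha, hb, hc⟩ := h
        rw [hxk1, hA3 ha hb, neg_one_sq, htr_one, E0]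
      · obtain ⟨ha, hb, hc, hd⟩ := h
        obtain ⟨-, b, hb2, hbm, hcase⟩ := hA6 ha hb hc hd
        exact htr0 _ b hb2 hbm hcase
    · rintro (h | h)
      · obtain ⟨ha, hb, hc, hd⟩ := h
        rw [htrℓ _ (hA4 ha hb hc).2, P1]
      · obtain ⟨ha, hb, hc, hd⟩ := h
        rw [htrℓ _ (hA5 ha hb hc hd).2, P1]
    · rintro (h | h | h)
      · rw [h, htr_one, E0]
      · obtain ⟨ha, hb, hc⟩ := h
        rw [hA3 ha hb, htr_neg_one, E0, neg_zero]
      · obtain ⟨ha, hb, hc, hd⟩ := h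
        obtain ⟨⟨b, hb2, hbm, hcase⟩, -⟩ := hA6 ha hb hc hd
        exact htr0 _ b hb2 hbm hcase
    · rintro (h | h)
      · exact absurd h hA2
      · obtain ⟨ha, hb, hc, hd⟩ := h
        rw [htr2ℓ _ (hA5 ha hb hc hd).1, P1]
    · rintro ⟨ha, hb, hc, hd⟩
      rw [htrℓ _ (hA4 ha hb hc).1, P1]
  · intro h2
    have E2 : ((e : ℕ) : ZMod 3) = (-1) ^ m' := by
      rw [hecast, hl2c h2]
      have hsub : (-1 : ZMod 3) - 1 = 1 := neg_one_sub_one_zmod3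
      rw [hsub, mul_one]
    have P2 : ((ℓ ^ m' : ℕ) : ZMod 3) = (-1) ^ m' := by rw [hpcast, hl2c h2]
    refine ⟨?_, ?_, ?_, ?_, ?_, ?_⟩
    · rintro (h | h | h)
      · rw [hxk1, h, one_pow, htr_one, E2]
      · exact absurd h hA2
      · obtain ⟨ha, hb, hc⟩ := h
        rw [hxk1, hA3 ha hb, neg_one_sq, htr_one, E2]
    · rintro (h | h)
      · obtain ⟨ha, hb, hc, hd⟩ := h
        rw [htrℓ _ (hA4 ha hb hc).2, P2, pow_succ]
        ring
      · obtain ⟨ha, hb, hc, hd⟩ := h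
        rw [htrℓ _ (hA5 ha hb hc hd).2, P2, pow_succ]
        ring
    · rintro ⟨ha, hb, hc, hd⟩
      obtain ⟨-, b, hb2, hbm, hcase⟩ := hA6 ha hb hc hd
      exact htr0 _ b hb2 hbm hcase
    · rintro (h | h)
      · rw [h, htr_one, E2]
      · obtain ⟨ha, hb, hc, hd⟩ := h
        rw [htr2ℓ _ (hA5 ha hb hc hd).1, P2]
    · rintro (h | h)
      · obtain ⟨ha, hb, hc⟩ := h
        rw [hA3 ha hb, htr_neg_one, E2, pow_succ]
        ring
      · obtain ⟨ha, hb, hc, hd⟩ := h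
        rw [htrℓ _ (hA4 ha hb hc).1, P2, pow_succ]
        ring
    · rintro (h | h)
      · exact absurd h hA2
      · obtain ⟨ha, hb, hc, hd⟩ := h
        obtain ⟨⟨b, hb2, hbm, hcase⟩, -⟩ := hA6 ha hb hc hd
        exact htr0 _ b hb2 hbm hcase
end
end
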